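/- arXiv:0904.2061 — 7 statements merged into one kernel-verified Lean document; each statement's English description precedes it below -/
import Mathlib

section
/- For every reasonable partition π of an instance of selfish bin covering, there exists a Nash equilibrium π' of the same instance with p(π') ≥ p(π). -/
open Finset

/-- Total size of the items in a bin. -/
def binSize {n : ℕ} (a : Fin n → ℕ) (B : Finset (Fin n)) : ℕ := ∑ j ∈ B, a j

/-- The social welfare of a partition: the number of covered bins. -/
def welfare {n : ℕ} (a : Fin n → ℕ) (b : ℕ)
    (π : Finpartition (univ : Finset (Fin n))) : ℕ :=
  (π.parts.filter fun B => b ≤ binSize a B).card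

/-- The payoff of item `j` when it lies in bin `B`. -/
def payoffIn {n : ℕ} (a : Fin n → ℕ) (b : ℕ) (j : Fin n) (B : Finset (Fin n)) : ℚ :=
  if b ≤ binSize a B then (a j : ℚ) / (binSize a B : ℚ) else 0

/-- Nash equilibrium. -/
def IsNE {n : ℕ} (a : Fin n → ℕ) (b : ℕ)
    (π : Finpartition (univ : Finset (Fin n))) : Prop :=
  (∀ j : Fin n, ∀ B ∈ π.parts, j ∉ B →
      payoffIn a b j (insert j B) ≤ payoffIn a b j (π.part j)) ∧
  ∀ j : Fin n, payoffIn a b j {j} ≤ payoffIn a b j (π.part j)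

/-- A partition is reasonable if at most one bin is uncovered. -/
def Reasonable {n : ℕ} (a : Fin n → ℕ) (b : ℕ)
    (π : Finpartition (univ : Finset (Fin n))) : Prop :=
  (π.parts.filter fun B => binSize a B < b).card ≤ 1

/-- A bin is minimal covered if it is covered and removing any member uncovers it. -/
def MinimalCovered {n : ℕ} (a : Fin n → ℕ) (b : ℕ) (B : Finset (Fin n)) : Prop :=
  b ≤ binSize a B ∧ ∀ j ∈ B, binSize a (B.erase j) < b

/-- A partition is rational if it is reasonable and every covered bin is minimal covered. -/
def RationalPartition {n : ℕ} (a : Fin n → ℕ) (b : ℕ)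
    (π : Finpartition (univ : Finset (Fin n))) : Prop :=
  Reasonable a b π ∧ ∀ B ∈ π.parts, b ≤ binSize a B → MinimalCovered a b B

/-- `B_m(π)`: the unique uncovered bin of a (rational) partition if one exists, `∅` otherwise. -/
def uncoveredBin {n : ℕ} (a : Fin n → ℕ) (b : ℕ)
    (π : Finpartition (univ : Finset (Fin n))) : Finset (Fin n) :=
  (π.parts.filter fun B => binSize a B < b).sup id

/-- `δ(B) = s(B)` if `B` is covered, `+∞` otherwise. -/
def delta {n : ℕ} (a : Fin n → ℕ) (b : ℕ) (B : Finset (Fin n)) : ℕ∞ :=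
  if b ≤ binSize a B then (binSize a B : ℕ∞) else ⊤

/-- Fireable Nash equilibrium of type (I). -/
def IsFNE1 {n : ℕ} (a : Fin n → ℕ) (b : ℕ)
    (π : Finpartition (univ : Finset (Fin n))) : Prop :=
  RationalPartition a b π ∧
  ¬ ∃ j : Fin n, b ≤ binSize a (π.part j) ∧
      MinimalCovered a b (insert j (uncoveredBin a b π)) ∧
      binSize a (uncoveredBin a b π) + a j < binSize a (π.part j)

/-- Fireable Nash equilibrium of type (II). -/
def IsFNE2 {n : ℕ} (a : Fin n → ℕ) (b : ℕ)
    (π : Finpartition (univ : Finset (Fin n))) : Prop :=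
  RationalPartition a b π ∧
  ¬ ∃ (j : Fin n) (E : Finset (Fin n)), b ≤ binSize a (π.part j) ∧
      E ⊆ uncoveredBin a b π ∧
      MinimalCovered a b (insert j (uncoveredBin a b π \ E)) ∧
      binSize a (uncoveredBin a b π \ E) + a j < binSize a (π.part j)

/-- Fireable Nash equilibrium of type (III). -/
def IsFNE3 {n : ℕ} (a : Fin n → ℕ) (b : ℕ)
    (π : Finpartition (univ : Finset (Fin n))) : Prop :=
  RationalPartition a b π ∧
  ¬ ∃ (j : Fin n) (Bi E : Finset (Fin n)), Bi ∈ π.parts ∧ j ∉ Bi ∧ E ⊆ Bi ∧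
      MinimalCovered a b (insert j (Bi \ E)) ∧
      ((binSize a (Bi \ E) + a j : ℕ) : ℕ∞) < min (delta a b Bi) (delta a b (π.part j))

/-- Modified strong Nash equilibrium. -/
def IsMSNE {n : ℕ} (a : Fin n → ℕ) (b : ℕ)
    (π : Finpartition (univ : Finset (Fin n))) : Prop :=
  RationalPartition a b π ∧
  ¬ ∃ (Bi E : Finset (Fin n)), Bi ∈ π.parts ∧ b ≤ binSize a Bi ∧ E ⊆ Bi ∧
      binSize a (uncoveredBin a b π) < binSize a (Bi \ E) ∧
      MinimalCovered a b (uncoveredBin a b π ∪ E)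

/-- Strong Nash equilibrium. -/
def IsSNE {n : ℕ} (a : Fin n → ℕ) (b : ℕ)
    (π : Finpartition (univ : Finset (Fin n))) : Prop :=
  ¬ ∃ B : Finset (Fin n), b ≤ binSize a B ∧
      ∀ j ∈ B, binSize a (π.part j) < b ∨ binSize a B < binSize a (π.part j)

/-- `F` is a minimum subset w.r.t. `(E, b)`. -/
def IsMinSubset {n : ℕ} (a : Fin n → ℕ) (b : ℕ) (F E : Finset (Fin n)) : Prop :=
  F ⊆ E ∧ b ≤ binSize a F ∧ ∀ G ⊆ E, b ≤ binSize a G → binSize a F ≤ binSize a G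

section AuxLemmas

open Finset
variable {n : ℕ}

/-- Build a finpartition of `univ` from a finset of parts. -/
def mkPartition (Q : Finset (Finset (Fin n)))
    (h1 : (Q : Set (Finset (Fin n))).PairwiseDisjoint id)
    (h2 : Q.sup id = univ) (h3 : ∅ ∉ Q) : Finpartition (univ : Finset (Fin n)) :=
  ⟨Q, Finset.supIndep_iff_pairwiseDisjoint.2 h1, h2, h3⟩

@[simp] lemma mkPartition_parts (Q : Finset (Finset (Fin n))) (h1 h2 h3) :
    (mkPartition Q h1 h2 h3).parts = Q := rfl

lemma binSize_mono (a : Fin n → ℕ) {B C : Finset (Fin n)} (h : B ⊆ C) :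
    binSize a B ≤ binSize a C :=
  Finset.sum_le_sum_of_subset h

/-- Existence of an all-covered partition with at least `welfare π` parts,
assuming the total size is at least `b`. -/
lemma exists_good (a : Fin n → ℕ) (b : ℕ) (hn : 1 ≤ n)
    (htot : b ≤ binSize a (univ : Finset (Fin n)))
    (π : Finpartition (univ : Finset (Fin n))) (hπ : Reasonable a b π) :
    ∃ π' : Finpartition (univ : Finset (Fin n)),
      (∀ B ∈ π'.parts, b ≤ binSize a B) ∧ welfare a b π ≤ π'.parts.card := by
  classical
  set w := welfare a b π with hw
  by_cases hcov : ∀ B ∈ π.parts, b ≤ binSize a B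
  · refine ⟨π, hcov, ?_⟩
    rw [hw, welfare]
    exact Finset.card_le_card (Finset.filter_subset _ _)
  · push_neg at hcov
    obtain ⟨U, hU, hUb⟩ := hcov
    by_cases hw0 : w = 0
    · have hne : (univ : Finset (Fin n)) ≠ ∅ := by
        have : Nonempty (Fin n) := ⟨⟨0, hn⟩⟩
        exact Finset.univ_nonempty.ne_empty
      refine ⟨Finpartition.indiscrete hne, ?_, ?_⟩
      · intro B hB
        rw [Finpartition.indiscrete_parts, Finset.mem_singleton] at hB
        subst hB; exact htot
      · omega
    · -- there is a covered part C; merge U into it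
      have hCex : ((π.parts.filter fun B => b ≤ binSize a B)).Nonempty := by
        rw [← Finset.card_pos, ← welfare, ← hw]; omega
      obtain ⟨C, hCf⟩ := hCex
      rw [Finset.mem_filter] at hCf
      obtain ⟨hC, hCb⟩ := hCf
      have hCU : C ≠ U := fun h => by rw [h] at hCb; omega
      -- any part other than U is covered
      have hothers : ∀ D ∈ π.parts, D ≠ U → b ≤ binSize a D := by
        intro D hD hDU
        by_contra hDb
        push_neg at hDb
        have h1 : D ∈ π.parts.filter fun B => binSize a B < b := by
          simp [hD, hDb]
        have h2 : U ∈ π.parts.filter fun B => binSize a B < b := by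
          simp [hU, hUb]
        have := Finset.card_le_one.mp hπ D h1 U h2
        exact hDU this
      set Q := insert (C ∪ U) ((π.parts.erase C).erase U) with hQ
      have hsubparts : ((π.parts.erase C).erase U) ⊆ π.parts :=
        (Finset.erase_subset _ _).trans (Finset.erase_subset _ _)
      obtain ⟨x0, hx0⟩ := π.nonempty_of_mem_parts hC
      obtain ⟨y0, hy0⟩ := π.nonempty_of_mem_parts hU
      have hCUnot : C ∪ U ∉ (π.parts.erase C).erase U := by
        intro hmem
        have hDparts := hsubparts hmem
        have : C ∪ U = C := π.eq_of_mem_parts hDparts hC (Finset.mem_union_left _ hx0) hx0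
        have hyC : y0 ∈ C := this ▸ Finset.mem_union_right _ hy0
        have : U = C := π.eq_of_mem_parts hU hC hy0 hyC
        exact hCU this.symm
      have hdisj : (Q : Set (Finset (Fin n))).PairwiseDisjoint id := by
        intro X hX Y hY hXY
        simp only [hQ, Finset.coe_insert, Set.mem_insert_iff, Finset.mem_coe] at hX hY
        have hpd := π.disjoint
        have key : ∀ D ∈ (π.parts.erase C).erase U, Disjoint (C ∪ U) D := by
          intro D hD
          have hDp := hsubparts hD
          have hDC : D ≠ C := Finset.ne_of_mem_erase (Finset.mem_of_mem_erase hD)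
          have hDU : D ≠ U := Finset.ne_of_mem_erase hD
          have d1 : Disjoint C D := hpd hC hDp (fun h => hDC h.symm)
          have d2 : Disjoint U D := hpd hU hDp (fun h => hDU h.symm)
          exact (Finset.disjoint_union_left).mpr ⟨d1, d2⟩
        rcases hX with rfl | hX <;> rcases hY with rfl | hY
        · exact absurd rfl hXY
        · exact key _ hY
        · exact (key _ hX).symm
        · exact hpd (hsubparts hX) (hsubparts hY) hXY
      have hsup : Q.sup id = univ := by
        apply Finset.Subset.antisymm
        · intro x _; exact Finset.mem_univ x
        · intro x _
          rw [Finset.mem_sup]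
          have hx : x ∈ π.part x := π.mem_part (Finset.mem_univ x)
          have hpx : π.part x ∈ π.parts := π.part_mem.2 (Finset.mem_univ x)
          by_cases h1 : π.part x = C
          · exact ⟨C ∪ U, Finset.mem_insert_self _ _, Finset.mem_union_left _ (h1 ▸ hx)⟩
          by_cases h2 : π.part x = U
          · exact ⟨C ∪ U, Finset.mem_insert_self _ _, Finset.mem_union_right _ (h2 ▸ hx)⟩
          · exact ⟨π.part x, Finset.mem_insert_of_mem
              (Finset.mem_erase.mpr ⟨h2, Finset.mem_erase.mpr ⟨h1, hpx⟩⟩), hx⟩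
      have hbot : ∅ ∉ Q := by
        rw [hQ, Finset.mem_insert]
        rintro (h | h)
        · exact absurd (h ▸ Finset.mem_union_left _ hx0) (Finset.notMem_empty x0)
        · exact π.bot_notMem (hsubparts h)
      refine ⟨mkPartition Q hdisj hsup hbot, ?_, ?_⟩
      · intro B hB
        rw [mkPartition_parts, hQ, Finset.mem_insert] at hB
        rcases hB with rfl | hB
        · exact le_trans hCb (binSize_mono a Finset.subset_union_left)
        · exact hothers B (hsubparts hB) (Finset.ne_of_mem_erase hB)
      · rw [mkPartition_parts, hQ, Finset.card_insert_of_notMem hCUnot]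
        have hUe : U ∈ π.parts.erase C := Finset.mem_erase.mpr ⟨fun h => hCU h.symm, hU⟩
        rw [Finset.card_erase_of_mem hUe, Finset.card_erase_of_mem hC]
        have hwcard : w ≤ (π.parts.filter fun B => b ≤ binSize a B).card := le_of_eq hw
        have hUnotf : U ∉ π.parts.filter fun B => b ≤ binSize a B := by
          simp only [Finset.mem_filter]; omega
        have : (π.parts.filter fun B => b ≤ binSize a B).card + 1 ≤ π.parts.card := by
          have := Finset.card_insert_of_notMem hUnotf
          have hsub : insert U (π.parts.filter fun B => b ≤ binSize a B) ⊆ π.parts := by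
            intro D hD
            rcases Finset.mem_insert.mp hD with rfl | hD
            · exact hU
            · exact Finset.mem_of_mem_filter _ hD
          have := Finset.card_le_card hsub
          omega
        omega

end AuxLemmas

section SwapLemma

open Finset
variable {n : ℕ}

/-- If an item can profitably move in an all-covered partition, there is an all-covered
partition with the same number of parts and strictly smaller sum of squared bin sizes. -/
lemma swap_lemma (a : Fin n → ℕ) (b : ℕ) (ha : ∀ j, 0 < a j)
    (ρ : Finpartition (univ : Finset (Fin n)))
    (hall : ∀ B ∈ ρ.parts, b ≤ binSize a B)
    (j : Fin n) (B : Finset (Fin n)) (hB : B ∈ ρ.parts) (hjB : j ∉ B)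
    (hlt : binSize a B + a j < binSize a (ρ.part j)) :
    ∃ ρ' : Finpartition (univ : Finset (Fin n)),
      (∀ D ∈ ρ'.parts, b ≤ binSize a D) ∧ ρ'.parts.card = ρ.parts.card ∧
      ∑ D ∈ ρ'.parts, (binSize a D) ^ 2 < ∑ D ∈ ρ.parts, (binSize a D) ^ 2 := by
  classical
  set S := ρ.part j with hSdef
  have hS : S ∈ ρ.parts := ρ.part_mem.2 (Finset.mem_univ j)
  have hjS : j ∈ S := ρ.mem_part (Finset.mem_univ j)
  have hSB : S ≠ B := fun h => hjB (h ▸ hjS)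
  have hsum : binSize a (S.erase j) + a j = binSize a S := Finset.sum_erase_add _ _ hjS
  have hins : binSize a (insert j B) = a j + binSize a B := Finset.sum_insert hjB
  obtain ⟨y0, hy0⟩ := ρ.nonempty_of_mem_parts hB
  have hBpos : 0 < binSize a B :=
    lt_of_lt_of_le (ha y0) (Finset.single_le_sum (fun i _ => Nat.zero_le _) hy0)
  have hepos : 0 < binSize a (S.erase j) := by omega
  have hene : (S.erase j).Nonempty := by
    by_contra h
    rw [Finset.not_nonempty_iff_eq_empty] at h
    rw [h] at hepos
    simp [binSize] at hepos
  set ee := (ρ.parts.erase S).erase B with heedef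
  have heesub : ee ⊆ ρ.parts := (Finset.erase_subset _ _).trans (Finset.erase_subset _ _)
  have hBeS : B ∈ ρ.parts.erase S := Finset.mem_erase.mpr ⟨fun h => hSB h.symm, hB⟩
  have hjnot : ∀ D ∈ ee, j ∉ D := by
    intro D hD hjD
    have : D = S := ρ.eq_of_mem_parts (heesub hD) hS hjD hjS
    exact Finset.ne_of_mem_erase (Finset.mem_of_mem_erase hD) this
  have hnot1 : insert j B ∉ ee := fun h => hjnot _ h (Finset.mem_insert_self _ _)
  have hnot2 : S.erase j ∉ insert (insert j B) ee := by
    rw [Finset.mem_insert]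
    rintro (h | h)
    · have : j ∈ S.erase j := h ▸ Finset.mem_insert_self _ _
      exact (Finset.notMem_erase _ _) this
    · obtain ⟨x, hx⟩ := hene
      have hxS : x ∈ S := Finset.mem_of_mem_erase hx
      have : S.erase j = S := ρ.eq_of_mem_parts (heesub h) hS hx hxS
      exact (Finset.notMem_erase j S) (by rw [this]; exact hjS)
  set Q := insert (S.erase j) (insert (insert j B) ee) with hQ
  have hpd := ρ.disjoint
  have hdisj : (Q : Set (Finset (Fin n))).PairwiseDisjoint id := by
    intro X hX Y hY hXY
    simp only [hQ, Finset.coe_insert, Set.mem_insert_iff, Finset.mem_coe] at hX hY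
    have dSB : Disjoint (S.erase j) (insert j B) := by
      rw [Finset.disjoint_insert_right]
      refine ⟨Finset.notMem_erase _ _, ?_⟩
      exact Disjoint.mono_left (Finset.erase_subset _ _) (hpd hS hB hSB)
    have dSe : ∀ D ∈ ee, Disjoint (S.erase j) D := fun D hD =>
      Disjoint.mono_left (Finset.erase_subset _ _)
        (hpd hS (heesub hD) fun h => (Finset.ne_of_mem_erase (Finset.mem_of_mem_erase hD)) h.symm)
    have dBe : ∀ D ∈ ee, Disjoint (insert j B) D := fun D hD => by
      rw [Finset.disjoint_insert_left]
      exact ⟨hjnot D hD, hpd hB (heesub hD) fun h => (Finset.ne_of_mem_erase hD) h.symm⟩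
    rcases hX with rfl | rfl | hX <;> rcases hY with rfl | rfl | hY
    · exact absurd rfl hXY
    · exact dSB
    · exact dSe _ hY
    · exact dSB.symm
    · exact absurd rfl hXY
    · exact dBe _ hY
    · exact (dSe _ hX).symm
    · exact (dBe _ hX).symm
    · exact hpd (heesub hX) (heesub hY) hXY
  have hsup : Q.sup id = univ := by
    apply Finset.Subset.antisymm
    · intro x _; exact Finset.mem_univ x
    · intro x _
      rw [Finset.mem_sup]
      have hx : x ∈ ρ.part x := ρ.mem_part (Finset.mem_univ x)
      have hpx : ρ.part x ∈ ρ.parts := ρ.part_mem.2 (Finset.mem_univ x)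
      by_cases h1 : ρ.part x = S
      · by_cases hxj : x = j
        · exact ⟨insert j B, Finset.mem_insert_of_mem (Finset.mem_insert_self _ _),
            hxj ▸ Finset.mem_insert_self _ _⟩
        · exact ⟨S.erase j, Finset.mem_insert_self _ _,
            Finset.mem_erase.mpr ⟨hxj, h1 ▸ hx⟩⟩
      by_cases h2 : ρ.part x = B
      · exact ⟨insert j B, Finset.mem_insert_of_mem (Finset.mem_insert_self _ _),
          Finset.mem_insert_of_mem (h2 ▸ hx)⟩
      · exact ⟨ρ.part x, Finset.mem_insert_of_mem (Finset.mem_insert_of_mem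
          (Finset.mem_erase.mpr ⟨h2, Finset.mem_erase.mpr ⟨h1, hpx⟩⟩)), hx⟩
  have hbot : ∅ ∉ Q := by
    rw [hQ, Finset.mem_insert, Finset.mem_insert]
    rintro (h | h | h)
    · exact absurd (h ▸ hene) (by simp)
    · exact absurd (h ▸ Finset.mem_insert_self j B) (Finset.notMem_empty j)
    · exact ρ.bot_notMem (heesub h)
  refine ⟨mkPartition Q hdisj hsup hbot, ?_, ?_, ?_⟩
  · intro D hD
    rw [mkPartition_parts, hQ, Finset.mem_insert, Finset.mem_insert] at hD
    have hBb := hall B hB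
    rcases hD with rfl | rfl | hD
    · omega
    · omega
    · exact hall D (heesub hD)
  · rw [mkPartition_parts, hQ, Finset.card_insert_of_notMem hnot2,
      Finset.card_insert_of_notMem hnot1, heedef,
      Finset.card_erase_of_mem hBeS, Finset.card_erase_of_mem hS]
    have h2 : 2 ≤ ρ.parts.card := Finset.one_lt_card.mpr ⟨S, hS, B, hB, hSB⟩
    omega
  · rw [mkPartition_parts, hQ, Finset.sum_insert hnot2, Finset.sum_insert hnot1]
    have hrw : ∑ D ∈ ρ.parts, (binSize a D) ^ 2
        = (binSize a S) ^ 2 + ((binSize a B) ^ 2 + ∑ D ∈ ee, (binSize a D) ^ 2) := by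
      rw [← Finset.insert_erase hS, Finset.sum_insert (Finset.notMem_erase _ _),
        ← Finset.insert_erase hBeS, Finset.sum_insert (Finset.notMem_erase _ _)]
    rw [hrw]
    have hkey : (binSize a (S.erase j)) ^ 2 + (binSize a (insert j B)) ^ 2
        < (binSize a S) ^ 2 + (binSize a B) ^ 2 := by nlinarith [ha j]
    omega

end SwapLemma

/-- every reasonable partition can be turned into an NE without
decreasing the social welfare. -/
theorem stmt1 (n : ℕ) (hn : 1 ≤ n) (a : Fin n → ℕ) (b : ℕ)
    (ha : ∀ j, 0 < a j) (hab : ∀ j, a j < b)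
    (π : Finpartition (univ : Finset (Fin n))) (hπ : Reasonable a b π) :
    ∃ π' : Finpartition (univ : Finset (Fin n)),
      IsNE a b π' ∧ welfare a b π ≤ welfare a b π' := by
  classical
  have hb0 : 0 < b := lt_trans (ha ⟨0, hn⟩) (hab ⟨0, hn⟩)
  by_cases htot : b ≤ binSize a (univ : Finset (Fin n))
  · -- total size at least b : minimize sum of squares over good partitions
    obtain ⟨π₀, hπ₀cov, hπ₀card⟩ := exists_good a b hn htot π hπ
    set w := welfare a b π with hw
    set 𝒮 : Finset (Finset (Finset (Fin n))) :=
      Finset.univ.filter (fun P : Finset (Finset (Fin n)) =>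
        ∃ ρ : Finpartition (univ : Finset (Fin n)), ρ.parts = P ∧
          (∀ B ∈ P, b ≤ binSize a B) ∧ w ≤ P.card) with h𝒮
    have hne : 𝒮.Nonempty := by
      refine ⟨π₀.parts, ?_⟩
      simp only [h𝒮, Finset.mem_filter, Finset.mem_univ, true_and]
      exact ⟨π₀, rfl, hπ₀cov, hπ₀card⟩
    obtain ⟨P₀, hP₀, hmin⟩ :=
      Finset.exists_min_image 𝒮 (fun P => ∑ D ∈ P, (binSize a D) ^ 2) hne
    rw [h𝒮, Finset.mem_filter] at hP₀
    obtain ⟨-, ρ, hρ, hcov, hcard⟩ := hP₀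
    refine ⟨ρ, ⟨?_, ?_⟩, ?_⟩
    · -- no profitable deviation to an existing bin
      intro j B hB hjB
      have hS : ρ.part j ∈ ρ.parts := ρ.part_mem.2 (Finset.mem_univ j)
      have hSb : b ≤ binSize a (ρ.part j) := hcov _ (hρ ▸ hS)
      have hBb : b ≤ binSize a B := hcov _ (hρ ▸ hB)
      have hins : binSize a (insert j B) = a j + binSize a B := Finset.sum_insert hjB
      by_cases hle : binSize a (ρ.part j) ≤ binSize a B + a j
      · unfold payoffIn
        rw [if_pos (by omega), if_pos hSb]
        have h1 : (0:ℚ) < (binSize a (ρ.part j) : ℚ) := by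
          exact_mod_cast lt_of_lt_of_le hb0 hSb
        have h2 : (binSize a (ρ.part j) : ℚ) ≤ (binSize a (insert j B) : ℚ) := by
          exact_mod_cast (by omega : binSize a (ρ.part j) ≤ binSize a (insert j B))
        have h3 : (0:ℚ) ≤ (a j : ℚ) := by positivity
        exact div_le_div_of_nonneg_left h3 h1 h2
      · exfalso
        push_neg at hle
        obtain ⟨ρ', hρ'cov, hρ'card, hρ'sum⟩ :=
          swap_lemma a b ha ρ (fun D hD => hcov D (hρ ▸ hD)) j B hB hjB hle
        have hmem : ρ'.parts ∈ 𝒮 := by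
          simp only [h𝒮, Finset.mem_filter, Finset.mem_univ, true_and]
          exact ⟨ρ', rfl, hρ'cov, by rw [hρ'card, hρ]; exact hcard⟩
        have := hmin ρ'.parts hmem
        rw [hρ] at hρ'sum
        omega
    · -- no profitable deviation to a fresh singleton bin
      intro j
      have hsing : binSize a ({j} : Finset (Fin n)) = a j := Finset.sum_singleton _ _
      have := hab j
      unfold payoffIn
      rw [if_neg (by omega)]
      split <;> positivity
    · -- welfare bound
      have : welfare a b ρ = ρ.parts.card := by
        unfold welfare
        rw [Finset.filter_true_of_mem (fun B hB => hcov B (hρ ▸ hB))]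
      rw [this, hρ]
      exact hcard
  · -- total size below b : the single-bin partition is an NE and welfare π = 0
    push_neg at htot
    have hne : (univ : Finset (Fin n)) ≠ ∅ := by
      have : Nonempty (Fin n) := ⟨⟨0, hn⟩⟩
      exact Finset.univ_nonempty.ne_empty
    refine ⟨Finpartition.indiscrete hne, ⟨?_, ?_⟩, ?_⟩
    · intro j B hB hjB
      rw [Finpartition.indiscrete_parts, Finset.mem_singleton] at hB
      exact absurd (hB ▸ Finset.mem_univ j) hjB
    · intro j
      have hsing : binSize a ({j} : Finset (Fin n)) = a j := Finset.sum_singleton _ _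
      have := hab j
      unfold payoffIn
      rw [if_neg (by omega)]
      split <;> positivity
    · have : welfare a b π = 0 := by
        unfold welfare
        rw [Finset.card_eq_zero, Finset.filter_eq_empty_iff]
        intro B hB
        have : binSize a B ≤ binSize a univ := binSize_mono a (π.le hB)
        omega
      omega
end

section
/- Every instance of selfish bin covering admits a rational partition π with p(π) = OPT. -/
open Finset

section Aux
variable {n : ℕ}

/-- Build a partition of `univ` from parts data. -/
def mkP (P : Finset (Finset (Fin n)))
    (hdis : (P : Set (Finset (Fin n))).PairwiseDisjoint id)
    (hcov : ∀ j : Fin n, ∃ B ∈ P, j ∈ B)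
    (hne : ∅ ∉ P) : Finpartition (univ : Finset (Fin n)) where
  parts := P
  supIndep := Finset.supIndep_iff_pairwiseDisjoint.2 hdis
  sup_parts := by
    apply le_antisymm (Finset.sup_le fun B _ => Finset.subset_univ B)
    intro j _
    exact Finset.mem_sup.2 (hcov j)
  bot_notMem := hne

@[simp] lemma mkP_parts (P : Finset (Finset (Fin n))) (h1 h2 h3) :
    (mkP P h1 h2 h3).parts = P := rfl

lemma part_disj (π : Finpartition (univ : Finset (Fin n))) {B C : Finset (Fin n)}
    (hB : B ∈ π.parts) (hC : C ∈ π.parts) (h : B ≠ C) : Disjoint B C :=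
  Finset.supIndep_iff_pairwiseDisjoint.1 π.supIndep hB hC h

lemma exists_part_mem (π : Finpartition (univ : Finset (Fin n))) (j : Fin n) :
    ∃ B ∈ π.parts, j ∈ B := by
  have h : j ∈ π.parts.sup id := by rw [π.sup_parts]; exact Finset.mem_univ j
  exact Finset.mem_sup.1 h

/-- Sum of the sizes of the covered bins. -/
def covSum (a : Fin n → ℕ) (b : ℕ) (π : Finpartition (univ : Finset (Fin n))) : ℕ :=
  ∑ B ∈ π.parts.filter fun B => b ≤ binSize a B, binSize a B

/-- Potential function. -/
def phi (a : Fin n → ℕ) (b : ℕ) (π : Finpartition (univ : Finset (Fin n))) : ℕ :=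
  covSum a b π * (n + 1) + π.parts.card

/-- Improvement relation: `σ` is strictly better than `π`. -/
def Improves (a : Fin n → ℕ) (b : ℕ) (π σ : Finpartition (univ : Finset (Fin n))) : Prop :=
  welfare a b π ≤ welfare a b σ ∧
    (welfare a b π < welfare a b σ ∨ phi a b σ < phi a b π)

lemma parts_card_le (σ : Finpartition (univ : Finset (Fin n))) : σ.parts.card ≤ n := by
  have := σ.card_parts_le_card
  simpa using this

lemma welfare_le (a : Fin n → ℕ) (b : ℕ) (σ : Finpartition (univ : Finset (Fin n))) :
    welfare a b σ ≤ n :=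
  (Finset.card_filter_le _ _).trans (parts_card_le σ)

lemma sum_parts_eq (a : Fin n → ℕ) (σ : Finpartition (univ : Finset (Fin n))) :
    ∑ B ∈ σ.parts, binSize a B = ∑ j, a j := by
  classical
  have hdis : (↑σ.parts : Set (Finset (Fin n))).PairwiseDisjoint id :=
    Finset.supIndep_iff_pairwiseDisjoint.1 σ.supIndep
  have h1 : σ.parts.biUnion id = univ := by
    rw [← Finset.sup_eq_biUnion, σ.sup_parts]
  calc ∑ B ∈ σ.parts, binSize a B = ∑ j ∈ σ.parts.biUnion id, a j :=
        (Finset.sum_biUnion hdis).symm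
    _ = ∑ j, a j := by rw [h1]

lemma covSum_le (a : Fin n → ℕ) (b : ℕ) (σ : Finpartition (univ : Finset (Fin n))) :
    covSum a b σ ≤ ∑ j, a j := by
  rw [← sum_parts_eq a σ]
  exact Finset.sum_le_sum_of_subset (Finset.filter_subset _ _)

/-- Big constant for the lexicographic objective. -/
def bigK (n : ℕ) (a : Fin n → ℕ) : ℕ := (∑ j, a j) * (n + 1) + n + 1

/-- The objective minimized. -/
def obj (a : Fin n → ℕ) (b : ℕ) (π : Finpartition (univ : Finset (Fin n))) : ℕ :=
  (n - welfare a b π) * bigK n a + phi a b π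

lemma phi_lt_K (a : Fin n → ℕ) (b : ℕ) (σ : Finpartition (univ : Finset (Fin n))) :
    phi a b σ < bigK n a := by
  have h1 := covSum_le a b σ
  have h2 := parts_card_le σ
  unfold phi bigK
  have : covSum a b σ * (n + 1) ≤ (∑ j, a j) * (n + 1) :=
    Nat.mul_le_mul_right _ h1
  omega

lemma obj_lt (a : Fin n → ℕ) (b : ℕ) (π σ : Finpartition (univ : Finset (Fin n)))
    (h : Improves a b π σ) : obj a b σ < obj a b π := by
  obtain ⟨h1, h2⟩ := h
  rcases h1.lt_or_eq with hlt | heq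
  · have hσ := welfare_le a b σ
    have hK := phi_lt_K a b σ
    have hmul : (n - welfare a b σ + 1) * bigK n a ≤ (n - welfare a b π) * bigK n a := by
      apply Nat.mul_le_mul_right
      omega
    unfold obj
    have : (n - welfare a b σ + 1) * bigK n a
        = (n - welfare a b σ) * bigK n a + bigK n a := by ring
    omega
  · rcases h2 with h2 | h2
    · omega
    · unfold obj
      rw [heq]
      omega

lemma merge_improves (a : Fin n → ℕ) (b : ℕ) (π : Finpartition (univ : Finset (Fin n)))
    (B₁ B₂ : Finset (Fin n)) (h1 : B₁ ∈ π.parts) (h2 : B₂ ∈ π.parts) (h12 : B₁ ≠ B₂)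
    (hu1 : binSize a B₁ < b) (hu2 : binSize a B₂ < b) :
    ∃ σ, Improves a b π σ := by
  classical
  obtain ⟨x1, hx1⟩ := π.nonempty_of_mem_parts h1
  obtain ⟨x2, hx2⟩ := π.nonempty_of_mem_parts h2
  set U : Finset (Fin n) := B₁ ∪ B₂ with hU
  set ee : Finset (Finset (Fin n)) := (π.parts.erase B₁).erase B₂ with hee
  have hee_mem : ∀ D ∈ ee, D ∈ π.parts ∧ D ≠ B₁ ∧ D ≠ B₂ := by
    intro D hD
    rw [hee, Finset.mem_erase, Finset.mem_erase] at hD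
    exact ⟨hD.2.2, hD.2.1, hD.1⟩
  have hU_not : U ∉ π.parts := by
    intro hUp
    have e1 : U = B₁ := π.eq_of_mem_parts hUp h1 (Finset.mem_union_left _ hx1) hx1
    have e2 : U = B₂ := π.eq_of_mem_parts hUp h2 (Finset.mem_union_right _ hx2) hx2
    exact h12 (e1.symm.trans e2)
  have hUee : U ∉ ee := fun h => hU_not (hee_mem U h).1
  set P : Finset (Finset (Fin n)) := insert U ee with hP
  have hPdis : (↑P : Set (Finset (Fin n))).PairwiseDisjoint id := by
    intro X hX Y hY hXY
    rw [hP, Finset.coe_insert, Set.mem_insert_iff] at hX hY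
    have hXY' : X ≠ Y := hXY
    rcases hX with rfl | hX <;> rcases hY with rfl | hY
    · exact absurd rfl hXY'
    · obtain ⟨hYp, hY1, hY2⟩ := hee_mem _ hY
      exact Finset.disjoint_union_left.2
        ⟨part_disj π h1 hYp (Ne.symm hY1), part_disj π h2 hYp (Ne.symm hY2)⟩
    · obtain ⟨hXp, hX1, hX2⟩ := hee_mem _ hX
      exact (Finset.disjoint_union_left.2
        ⟨part_disj π h1 hXp (Ne.symm hX1), part_disj π h2 hXp (Ne.symm hX2)⟩).symm
    · exact part_disj π (hee_mem _ hX).1 (hee_mem _ hY).1 hXY'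
  have hPcov : ∀ j : Fin n, ∃ B ∈ P, j ∈ B := by
    intro j
    obtain ⟨D, hD, hjD⟩ := exists_part_mem π j
    by_cases e1 : D = B₁
    · exact ⟨U, Finset.mem_insert_self _ _, Finset.mem_union_left _ (e1 ▸ hjD)⟩
    by_cases e2 : D = B₂
    · exact ⟨U, Finset.mem_insert_self _ _, Finset.mem_union_right _ (e2 ▸ hjD)⟩
    · exact ⟨D, Finset.mem_insert_of_mem
        (by rw [hee, Finset.mem_erase, Finset.mem_erase]; exact ⟨e2, e1, hD⟩), hjD⟩
  have hPbot : ∅ ∉ P := by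
    rw [hP, Finset.mem_insert]
    rintro (h | h)
    · exact Finset.notMem_empty x1 (h ▸ Finset.mem_union_left _ hx1)
    · exact π.bot_notMem (by simpa using (hee_mem _ h).1)
  refine ⟨mkP P hPdis hPcov hPbot, ?_⟩
  -- filter computations
  have hB1f : B₁ ∉ π.parts.filter fun B => b ≤ binSize a B :=
    fun h => absurd (Finset.mem_filter.1 h).2 (not_le.2 hu1)
  have hB2f : B₂ ∉ (π.parts.filter fun B => b ≤ binSize a B).erase B₁ :=
    fun h => absurd (Finset.mem_filter.1 (Finset.mem_erase.1 h).2).2 (not_le.2 hu2)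
  have hf_ee : (ee.filter fun B => b ≤ binSize a B)
      = π.parts.filter fun B => b ≤ binSize a B := by
    rw [hee, Finset.filter_erase, Finset.filter_erase,
      Finset.erase_eq_of_notMem hB2f, Finset.erase_eq_of_notMem hB1f]
  have hUf : U ∉ π.parts.filter fun B => b ≤ binSize a B :=
    fun h => hU_not (Finset.mem_filter.1 h).1
  have hB2e : B₂ ∈ π.parts.erase B₁ := Finset.mem_erase.2 ⟨Ne.symm h12, h2⟩
  have hcard_ee : ee.card + 2 = π.parts.card := by
    have c1 : ee.card = (π.parts.erase B₁).card - 1 := by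
      rw [hee]; exact Finset.card_erase_of_mem hB2e
    have c2 : (π.parts.erase B₁).card = π.parts.card - 1 :=
      Finset.card_erase_of_mem h1
    have p1 : 0 < (π.parts.erase B₁).card := Finset.card_pos.2 ⟨B₂, hB2e⟩
    have p2 : 0 < π.parts.card := Finset.card_pos.2 ⟨B₁, h1⟩
    omega
  have hwP : (P.filter fun B => b ≤ binSize a B)
      = if b ≤ binSize a U then insert U (π.parts.filter fun B => b ≤ binSize a B)
        else π.parts.filter fun B => b ≤ binSize a B := by
    rw [hP, Finset.filter_insert, hf_ee]
  by_cases hUcov : b ≤ binSize a U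
  · -- welfare increases
    have hw : welfare a b (mkP P hPdis hPcov hPbot)
        = welfare a b π + 1 := by
      unfold welfare
      rw [mkP_parts, hwP, if_pos hUcov, Finset.card_insert_of_notMem hUf]
    constructor
    · omega
    · left; omega
  · -- welfare the same, phi decreases
    have hw : welfare a b (mkP P hPdis hPcov hPbot) = welfare a b π := by
      unfold welfare
      rw [mkP_parts, hwP, if_neg hUcov]
    have hcs : covSum a b (mkP P hPdis hPcov hPbot) = covSum a b π := by
      unfold covSum
      rw [mkP_parts, hwP, if_neg hUcov]
    have hcard : P.card + 1 = π.parts.card := by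
      rw [hP, Finset.card_insert_of_notMem hUee]; omega
    constructor
    · omega
    · right
      unfold phi
      rw [hcs, mkP_parts]
      omega

lemma split_improves (a : Fin n → ℕ) (b : ℕ) (π : Finpartition (univ : Finset (Fin n)))
    (B : Finset (Fin n)) (j : Fin n) (haj : 0 < a j) (hajb : a j < b)
    (hB : B ∈ π.parts) (hBc : b ≤ binSize a B) (hj : j ∈ B)
    (hEc : b ≤ binSize a (B.erase j)) :
    ∃ σ, Improves a b π σ := by
  classical
  have hb0 : 0 < b := haj.trans hajb
  set Bej : Finset (Fin n) := B.erase j with hBej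
  have hBej_ne : Bej.Nonempty := by
    rw [Finset.nonempty_iff_ne_empty]
    intro h
    rw [h] at hEc
    simp [binSize] at hEc
    omega
  obtain ⟨x0, hx0⟩ := hBej_ne
  have hx0B : x0 ∈ B := Finset.mem_of_mem_erase hx0
  have hBej_not : Bej ∉ π.parts := by
    intro hp
    have : Bej = B := π.eq_of_mem_parts hp hB hx0 hx0B
    have : j ∈ Bej := this ▸ hj
    exact (Finset.notMem_erase j B) this
  set e1 : Finset (Finset (Fin n)) := π.parts.erase B with he1
  have he1_mem : ∀ D ∈ e1, D ∈ π.parts ∧ D ≠ B := by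
    intro D hD
    rw [he1, Finset.mem_erase] at hD
    exact ⟨hD.2, hD.1⟩
  have hjD : ∀ D ∈ e1, j ∉ D := by
    intro D hD hjd
    obtain ⟨hDp, hDB⟩ := he1_mem D hD
    exact (Finset.disjoint_left.1 (part_disj π hDp hB hDB)) hjd hj
  have hBej_ne1 : Bej ∉ e1 := fun h => hBej_not (he1_mem _ h).1
  have hsing_not : ({j} : Finset (Fin n)) ∉ insert Bej e1 := by
    rw [Finset.mem_insert]
    rintro (h | h)
    · rw [hBej] at h
      exact (Finset.notMem_erase j B) (h ▸ Finset.mem_singleton_self j)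
    · exact hjD _ h (Finset.mem_singleton_self j)
  set P : Finset (Finset (Fin n)) := insert {j} (insert Bej e1) with hP
  have hPdis : (↑P : Set (Finset (Fin n))).PairwiseDisjoint id := by
    intro X hX Y hY hXY
    rw [hP, Finset.coe_insert, Set.mem_insert_iff, Finset.coe_insert,
      Set.mem_insert_iff] at hX hY
    have hXY' : X ≠ Y := hXY
    have dje : Disjoint ({j} : Finset (Fin n)) Bej :=
      Finset.disjoint_singleton_left.2 (Finset.notMem_erase j B)
    have djD : ∀ D ∈ e1, Disjoint ({j} : Finset (Fin n)) D :=
      fun D hD => Finset.disjoint_singleton_left.2 (hjD D hD)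
    have dBejD : ∀ D ∈ e1, Disjoint Bej D := fun D hD => by
      obtain ⟨hDp, hDB⟩ := he1_mem D hD
      exact Finset.disjoint_of_subset_left (Finset.erase_subset j B)
        (part_disj π hB hDp (Ne.symm hDB))
    rcases hX with rfl | rfl | hX <;> rcases hY with rfl | rfl | hY
    · exact absurd rfl hXY'
    · exact dje
    · exact djD _ hY
    · exact dje.symm
    · exact absurd rfl hXY'
    · exact dBejD _ hY
    · exact (djD _ hX).symm
    · exact (dBejD _ hX).symm
    · exact part_disj π (he1_mem _ hX).1 (he1_mem _ hY).1 hXY'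
  have hPcov : ∀ i : Fin n, ∃ C ∈ P, i ∈ C := by
    intro i
    obtain ⟨D, hD, hiD⟩ := exists_part_mem π i
    by_cases e : D = B
    · subst e
      by_cases eij : i = j
      · exact ⟨{j}, Finset.mem_insert_self _ _, by simp [eij]⟩
      · exact ⟨Bej, Finset.mem_insert_of_mem (Finset.mem_insert_self _ _),
          Finset.mem_erase.2 ⟨eij, hiD⟩⟩
    · exact ⟨D, Finset.mem_insert_of_mem (Finset.mem_insert_of_mem
        (Finset.mem_erase.2 ⟨e, hD⟩)), hiD⟩
  have hPbot : ∅ ∉ P := by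
    rw [hP, Finset.mem_insert, Finset.mem_insert]
    rintro (h | h | h)
    · exact Finset.notMem_empty j (h ▸ Finset.mem_singleton_self j)
    · exact Finset.notMem_empty x0 (h ▸ hx0)
    · exact π.bot_notMem (by simpa using (he1_mem _ h).1)
  refine ⟨mkP P hPdis hPcov hPbot, ?_⟩
  -- filter computations
  have hBf : B ∈ π.parts.filter fun C => b ≤ binSize a C :=
    Finset.mem_filter.2 ⟨hB, hBc⟩
  have hf_e1 : (e1.filter fun C => b ≤ binSize a C)
      = (π.parts.filter fun C => b ≤ binSize a C).erase B := by
    rw [he1, Finset.filter_erase]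
  have hsing_uncov : ¬ b ≤ binSize a ({j} : Finset (Fin n)) := by
    simp [binSize]
    omega
  have hBej_notf : Bej ∉ (π.parts.filter fun C => b ≤ binSize a C).erase B :=
    fun h => hBej_not (Finset.mem_filter.1 (Finset.mem_erase.1 h).2).1
  have hfP : (P.filter fun C => b ≤ binSize a C)
      = insert Bej ((π.parts.filter fun C => b ≤ binSize a C).erase B) := by
    rw [hP, Finset.filter_insert, if_neg hsing_uncov, Finset.filter_insert,
      if_pos hEc, hf_e1]
  have hw : welfare a b (mkP P hPdis hPcov hPbot) = welfare a b π := by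
    unfold welfare
    rw [mkP_parts, hfP, Finset.card_insert_of_notMem hBej_notf,
      Finset.card_erase_of_mem hBf]
    have : 0 < (π.parts.filter fun C => b ≤ binSize a C).card :=
      Finset.card_pos.2 ⟨B, hBf⟩
    omega
  have hsize : binSize a Bej + a j = binSize a B := by
    rw [hBej]
    exact Finset.sum_erase_add B a hj
  have hcs : covSum a b (mkP P hPdis hPcov hPbot) + a j = covSum a b π := by
    unfold covSum
    rw [mkP_parts, hfP, Finset.sum_insert hBej_notf]
    have h2 : (∑ C ∈ (π.parts.filter fun C => b ≤ binSize a C).erase B, binSize a C)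
        + binSize a B = ∑ C ∈ π.parts.filter fun C => b ≤ binSize a C, binSize a C :=
      Finset.sum_erase_add _ _ hBf
    omega
  have hcard : P.card = π.parts.card + 1 := by
    rw [hP, Finset.card_insert_of_notMem hsing_not,
      Finset.card_insert_of_notMem hBej_ne1, he1,
      Finset.card_erase_of_mem hB]
    have : 0 < π.parts.card := Finset.card_pos.2 ⟨B, hB⟩
    omega
  constructor
  · omega
  · right
    unfold phi
    rw [mkP_parts, hcard]
    have hmul : covSum a b π * (n + 1)
        = covSum a b (mkP P hPdis hPcov hPbot) * (n + 1) + a j * (n + 1) := by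
      rw [← hcs]; ring
    have hge : n + 1 ≤ a j * (n + 1) := Nat.le_mul_of_pos_left _ haj
    have hn1 : 0 < n := j.pos
    omega

/-- every instance admits a rational partition whose welfare equals `OPT`. -/
theorem stmt4 (n : ℕ) (hn : 1 ≤ n) (a : Fin n → ℕ) (b : ℕ)
    (ha : ∀ j, 0 < a j) (hab : ∀ j, a j < b) :
    ∃ π : Finpartition (univ : Finset (Fin n)),
      RationalPartition a b π ∧ ∀ σ : Finpartition (univ : Finset (Fin n)),
        welfare a b σ ≤ welfare a b π := by
  classical
  have huniv : (univ : Finset (Fin n)).Nonempty := ⟨⟨0, hn⟩, Finset.mem_univ _⟩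
  have hbot : (univ : Finset (Fin n)) ≠ ⊥ := by
    rw [Finset.bot_eq_empty]
    exact huniv.ne_empty
  obtain ⟨π, hmin⟩ : ∃ π : Finpartition (univ : Finset (Fin n)),
      ∀ σ, obj a b π ≤ obj a b σ := by
    have hS : (Set.range (obj a b)).Nonempty := ⟨_, ⟨Finpartition.indiscrete hbot, rfl⟩⟩
    obtain ⟨π, hπ⟩ := Nat.sInf_mem hS
    exact ⟨π, fun σ => hπ ▸ Nat.sInf_le ⟨σ, rfl⟩⟩
  have hni : ∀ σ, ¬ Improves a b π σ :=
    fun σ h => absurd (hmin σ) (not_le.2 (obj_lt a b π σ h))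
  refine ⟨π, ⟨?_, ?_⟩, ?_⟩
  · -- Reasonable
    by_contra hre
    unfold Reasonable at hre
    obtain ⟨B₁, hB₁, B₂, hB₂, h12⟩ := Finset.one_lt_card.1 (not_le.1 hre)
    rw [Finset.mem_filter] at hB₁ hB₂
    obtain ⟨σ, hσ⟩ := merge_improves a b π B₁ B₂ hB₁.1 hB₂.1 h12 hB₁.2 hB₂.2
    exact hni σ hσ
  · -- every covered bin is minimal covered
    intro B hB hBc
    refine ⟨hBc, ?_⟩
    intro j hj
    by_contra h
    push_neg at h
    obtain ⟨σ, hσ⟩ := split_improves a b π B j (ha j) (hab j) hB hBc hj h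
    exact hni σ hσ
  · -- welfare maximal
    intro σ
    by_contra h
    push_neg at h
    exact hni σ ⟨h.le, Or.inl h⟩
end Aux
end

section
/- For every rational partition π of an instance of selfish bin covering, OPT ≤ 2·p(π). -/
open Finset

/-- for every rational partition `π`, `OPT ≤ 2 p(π)`. -/
theorem stmt5 (n : ℕ) (hn : 1 ≤ n) (a : Fin n → ℕ) (b : ℕ)
    (ha : ∀ j, 0 < a j) (hab : ∀ j, a j < b)
    (π : Finpartition (univ : Finset (Fin n))) (hπ : RationalPartition a b π)
    (σ : Finpartition (univ : Finset (Fin n))) :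
    welfare a b σ ≤ 2 * welfare a b π := by
  classical
  have hb2 : 2 ≤ b := by
    have h1 := ha ⟨0, hn⟩; have h2 := hab ⟨0, hn⟩; omega
  -- the total size
  set S := ∑ j, a j with hS
  have hsum : ∀ (τ : Finpartition (univ : Finset (Fin n))),
      ∑ B ∈ τ.parts, binSize a B = S := by
    intro τ
    have hcov : (univ : Finset (Fin n)) = τ.parts.biUnion id := by
      rw [← Finset.sup_eq_biUnion, τ.sup_parts]
    have hdisj : (τ.parts : Set (Finset (Fin n))).PairwiseDisjoint id :=
      (Finset.supIndep_iff_pairwiseDisjoint).mp τ.supIndep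
    rw [hS]
    conv_rhs => rw [hcov]
    rw [Finset.sum_biUnion hdisj]
    rfl
  -- σ's welfare bound
  have hσ : b * welfare a b σ ≤ S := by
    calc b * welfare a b σ = welfare a b σ • b := by
          rw [smul_eq_mul, mul_comm]
      _ ≤ ∑ B ∈ σ.parts.filter (fun B => b ≤ binSize a B), binSize a B := by
          apply Finset.card_nsmul_le_sum
          intro B hB
          exact (Finset.mem_filter.mp hB).2
      _ ≤ ∑ B ∈ σ.parts, binSize a B :=
          Finset.sum_le_sum_of_subset (Finset.filter_subset _ _)
      _ = S := hsum σ
  -- π's parts split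
  have hsplit : (∑ B ∈ π.parts.filter (fun B => b ≤ binSize a B), binSize a B)
      + (∑ B ∈ π.parts.filter (fun B => ¬ b ≤ binSize a B), binSize a B) = S := by
    rw [Finset.sum_filter_add_sum_filter_not, hsum π]
  -- covered bins of π have size ≤ 2b - 2
  have hcovbd : ∑ B ∈ π.parts.filter (fun B => b ≤ binSize a B), binSize a B
      ≤ welfare a b π * (2 * b - 2) := by
    apply Finset.sum_le_card_nsmul
    intro B hB
    obtain ⟨hBp, hBc⟩ := Finset.mem_filter.mp hB
    have hmin := hπ.2 B hBp hBc
    obtain ⟨j, hj⟩ := π.nonempty_of_mem_parts hBp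
    have heq : binSize a (B.erase j) + a j = binSize a B :=
      Finset.sum_erase_add B a hj
    have h1 := hmin.2 j hj
    have h2 := hab j
    omega
  -- uncovered bins: at most one, of size ≤ b - 1
  have huncbd : ∑ B ∈ π.parts.filter (fun B => ¬ b ≤ binSize a B), binSize a B
      ≤ b - 1 := by
    have hcard : (π.parts.filter (fun B => ¬ b ≤ binSize a B)).card ≤ 1 := by
      have := hπ.1
      unfold Reasonable at this
      simpa [not_le] using this
    calc ∑ B ∈ π.parts.filter (fun B => ¬ b ≤ binSize a B), binSize a B
        ≤ (π.parts.filter (fun B => ¬ b ≤ binSize a B)).card • (b - 1) := by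
          apply Finset.sum_le_card_nsmul
          intro B hB
          have := (Finset.mem_filter.mp hB).2
          omega
      _ ≤ 1 * (b - 1) := by
          rw [smul_eq_mul]
          exact Nat.mul_le_mul_right _ hcard
      _ = b - 1 := one_mul _
  -- combine
  have key : b * welfare a b σ ≤ welfare a b π * (2 * b - 2) + (b - 1) := by
    omega
  by_contra hcon
  push_neg at hcon
  have h1 : 2 * welfare a b π + 1 ≤ welfare a b σ := hcon
  have h2 : b * (2 * welfare a b π + 1) ≤ b * welfare a b σ :=
    Nat.mul_le_mul_left b h1
  have h3 : welfare a b π * (2 * b - 2) + welfare a b π * 2 = welfare a b π * (2 * b) := by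
    rw [← Nat.mul_add]
    congr 1
    omega
  have h4 : b * (2 * welfare a b π + 1) = welfare a b π * (2 * b) + b := by ring
  omega
end

section
/- Every instance of selfish bin covering admits an FNE(III) partition π with p(π) = OPT; that is, the price of stability with respect to FNE(III) is 1. -/
open Finset

section Stmt8Aux

variable {n : ℕ}

/-- Covered-sum of a partition. -/
def csum (a : Fin n → ℕ) (b : ℕ) (π : Finpartition (univ : Finset (Fin n))) : ℕ :=
  ∑ B ∈ π.parts, if b ≤ binSize a B then binSize a B else 0

/-- Sum of squares of covered bin sizes. -/
def sqm (a : Fin n → ℕ) (b : ℕ) (π : Finpartition (univ : Finset (Fin n))) : ℕ :=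
  ∑ B ∈ π.parts, if b ≤ binSize a B then binSize a B ^ 2 else 0

lemma welfare_eq_sum (a : Fin n → ℕ) (b : ℕ) (π : Finpartition (univ : Finset (Fin n))) :
    welfare a b π = ∑ B ∈ π.parts, if b ≤ binSize a B then 1 else 0 :=
  Finset.card_filter _ _

lemma pairwiseDisjoint_pair' {s t : Finset (Fin n)} (h : Disjoint s t) :
    (↑({s, t} : Finset (Finset (Fin n))) : Set (Finset (Fin n))).PairwiseDisjoint id := by
  intro x hx y hy hne
  simp only [coe_insert, coe_singleton, Set.mem_insert_iff, Set.mem_singleton_iff] at hx hy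
  rcases hx with rfl | rfl <;> rcases hy with rfl | rfl
  · exact absurd rfl hne
  · exact h
  · exact h.symm
  · exact absurd rfl hne

/-- Replace a subfamily `R` of the parts of `π` by a new family `T` covering the same
ground set. -/
def replaceParts (π : Finpartition (univ : Finset (Fin n)))
    (R T : Finset (Finset (Fin n))) (hR : R ⊆ π.parts)
    (hd : (↑T : Set (Finset (Fin n))).PairwiseDisjoint id)
    (hs : T.sup id = R.sup id) (hne : (∅ : Finset (Fin n)) ∉ T) :
    Finpartition (univ : Finset (Fin n)) where
  parts := (π.parts \ R) ∪ T
  supIndep := by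
    rw [Finset.supIndep_iff_pairwiseDisjoint]
    have hπ : (↑π.parts : Set (Finset (Fin n))).PairwiseDisjoint id :=
      Finset.supIndep_iff_pairwiseDisjoint.mp π.supIndep
    have key : ∀ p ∈ π.parts \ R, ∀ t ∈ T, Disjoint p t := by
      intro p hp t ht
      have hp' := Finset.mem_sdiff.mp hp
      have hdisj : Disjoint p (R.sup id) := by
        rw [Finset.disjoint_sup_right]
        intro r hr
        exact hπ hp'.1 (hR hr) (by rintro rfl; exact hp'.2 hr)
      exact hdisj.mono_right (le_trans (Finset.le_sup (f := id) ht) hs.le)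
    intro x hx y hy hxy
    simp only [coe_union, Set.mem_union, mem_coe] at hx hy
    rcases hx with hx | hx <;> rcases hy with hy | hy
    · exact hπ (Finset.mem_sdiff.mp hx).1 (Finset.mem_sdiff.mp hy).1 hxy
    · exact key _ hx _ hy
    · exact (key _ hy _ hx).symm
    · exact hd hx hy hxy
  sup_parts := by
    rw [Finset.sup_union, hs, ← Finset.sup_union, Finset.sdiff_union_of_subset hR,
      π.sup_parts]
  bot_notMem := by
    simp only [Finset.mem_union, Finset.mem_sdiff, not_or]
    exact ⟨fun h => π.bot_notMem h.1, hne⟩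

lemma replaceParts_sum (π : Finpartition (univ : Finset (Fin n)))
    (R T : Finset (Finset (Fin n))) (hR : R ⊆ π.parts)
    (hd : (↑T : Set (Finset (Fin n))).PairwiseDisjoint id)
    (hs : T.sup id = R.sup id) (hne : (∅ : Finset (Fin n)) ∉ T)
    (f : Finset (Fin n) → ℕ) :
    (∑ B ∈ (replaceParts π R T hR hd hs hne).parts, f B) + ∑ B ∈ R, f B
      = (∑ B ∈ π.parts, f B) + ∑ B ∈ T, f B := by
  have hπ : (↑π.parts : Set (Finset (Fin n))).PairwiseDisjoint id :=
    Finset.supIndep_iff_pairwiseDisjoint.mp π.supIndep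
  have hdisjT : Disjoint (π.parts \ R) T := by
    rw [Finset.disjoint_left]
    intro t htp htT
    have h1 := Finset.mem_sdiff.mp htp
    have hdisj : Disjoint t (R.sup id) := by
      rw [Finset.disjoint_sup_right]
      intro r hr
      exact hπ h1.1 (hR hr) (by rintro rfl; exact h1.2 hr)
    have hle : t ≤ R.sup id := le_trans (Finset.le_sup (f := id) htT) hs.le
    have hbot : t ≤ ⊥ := hdisj le_rfl hle
    have : t = (∅ : Finset (Fin n)) := le_bot_iff.mp hbot
    exact hne (this ▸ htT)
  have h2 : ∑ B ∈ π.parts, f B = (∑ B ∈ π.parts \ R, f B) + ∑ B ∈ R, f B := by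
    rw [← Finset.sum_union Finset.sdiff_disjoint, Finset.sdiff_union_of_subset hR]
  have h3 : (∑ B ∈ (π.parts \ R) ∪ T, f B) = (∑ B ∈ π.parts \ R, f B) + ∑ B ∈ T, f B :=
    Finset.sum_union hdisjT
  show (∑ B ∈ (π.parts \ R) ∪ T, f B) + ∑ B ∈ R, f B = _
  omega

lemma sq_spread_nat {u v x y : ℕ} (huv : u + v = x + y) (hux : u < x) (huy : u < y) :
    x ^ 2 + y ^ 2 < u ^ 2 + v ^ 2 := by
  zify at *
  nlinarith [mul_pos (sub_pos.mpr hux) (sub_pos.mpr huy)]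

end Stmt8Aux

set_option maxHeartbeats 1600000 in
/-- every instance admits an FNE(III) whose welfare equals `OPT`
(price of stability w.r.t. FNE(III) is 1). -/
theorem stmt8 (n : ℕ) (hn : 1 ≤ n) (a : Fin n → ℕ) (b : ℕ)
    (ha : ∀ j, 0 < a j) (hab : ∀ j, a j < b) :
    ∃ π : Finpartition (univ : Finset (Fin n)),
      IsFNE3 a b π ∧ ∀ σ : Finpartition (univ : Finset (Fin n)),
        welfare a b σ ≤ welfare a b π := by
  classical
  -- Four-level lexicographic optimization
  obtain ⟨π1, -, h1⟩ := Finset.exists_max_image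
    (Finset.univ : Finset (Finpartition (univ : Finset (Fin n)))) (welfare a b)
    Finset.univ_nonempty
  obtain ⟨π2, hm2, h2⟩ := Finset.exists_min_image
    (Finset.univ.filter fun σ => welfare a b σ = welfare a b π1) (csum a b)
    ⟨π1, by simp⟩
  simp only [Finset.mem_filter, Finset.mem_univ, true_and] at hm2
  obtain ⟨π3, hm3, h3⟩ := Finset.exists_max_image
    ((Finset.univ.filter fun σ => welfare a b σ = welfare a b π1).filter
      fun σ => csum a b σ = csum a b π2) (sqm a b)
    ⟨π2, by simp [hm2]⟩
  simp only [Finset.mem_filter, Finset.mem_univ, true_and] at hm3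
  obtain ⟨π, hm4, h4⟩ := Finset.exists_min_image
    (((Finset.univ.filter fun σ => welfare a b σ = welfare a b π1).filter
      fun σ => csum a b σ = csum a b π2).filter
      fun σ => sqm a b σ = sqm a b π3) (fun σ => σ.parts.card)
    ⟨π3, by simp [hm3.1, hm3.2]⟩
  simp only [Finset.mem_filter, Finset.mem_univ, true_and] at hm4
  obtain ⟨⟨hπw, hπc⟩, hπq⟩ := hm4
  have H1 : ∀ σ, welfare a b σ ≤ welfare a b π := by
    intro σ; rw [hπw]; exact h1 σ (Finset.mem_univ σ)
  have H2 : ∀ σ, welfare a b σ = welfare a b π → csum a b π ≤ csum a b σ := by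
    intro σ hσ; rw [hπc]
    exact h2 σ (by simp [Finset.mem_filter, hσ.trans hπw])
  have H3 : ∀ σ, welfare a b σ = welfare a b π → csum a b σ = csum a b π →
      sqm a b σ ≤ sqm a b π := by
    intro σ hσ hσ2; rw [hπq]
    exact h3 σ (by simp [Finset.mem_filter, hσ.trans hπw, hσ2.trans hπc])
  have H4 : ∀ σ, welfare a b σ = welfare a b π → csum a b σ = csum a b π →
      sqm a b σ = sqm a b π → π.parts.card ≤ σ.parts.card := by
    intro σ hσ hσ2 hσ3
    exact h4 σ (by simp [Finset.mem_filter, hσ.trans hπw, hσ2.trans hπc, hσ3.trans hπq])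
  have hπpd : (↑π.parts : Set (Finset (Fin n))).PairwiseDisjoint id :=
    Finset.supIndep_iff_pairwiseDisjoint.mp π.supIndep
  have hbpos : 2 ≤ b := by
    have := ha ⟨0, hn⟩; have := hab ⟨0, hn⟩; omega
  -- Step 1 : π is reasonable
  have hreas : Reasonable a b π := by
    by_contra hcon
    unfold Reasonable at hcon
    push_neg at hcon
    obtain ⟨X, hX, Y, hY, hXY⟩ := Finset.one_lt_card.mp hcon
    rw [Finset.mem_filter] at hX hY
    obtain ⟨hXp, hXu⟩ := hX
    obtain ⟨hYp, hYu⟩ := hY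
    have hRsub : ({X, Y} : Finset (Finset (Fin n))) ⊆ π.parts := by
      intro t ht
      rcases Finset.mem_insert.mp ht with rfl | ht
      · exact hXp
      · rw [Finset.mem_singleton] at ht; exact ht ▸ hYp
    have hd : (↑({X ∪ Y} : Finset (Finset (Fin n))) : Set (Finset (Fin n))).PairwiseDisjoint
        id := by
      simp
    have hs : ({X ∪ Y} : Finset (Finset (Fin n))).sup id
        = ({X, Y} : Finset (Finset (Fin n))).sup id := by
      simp [Finset.sup_insert, Finset.sup_singleton]
    have hXne : (X ∪ Y).Nonempty :=
      (π.nonempty_of_mem_parts hXp).mono Finset.subset_union_left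
    have hne : (∅ : Finset (Fin n)) ∉ ({X ∪ Y} : Finset (Finset (Fin n))) := by
      rw [Finset.mem_singleton]
      intro h
      rw [← h] at hXne
      exact Finset.not_nonempty_empty hXne
    set σ := replaceParts π {X, Y} {X ∪ Y} hRsub hd hs hne with hσdef
    have key : ∀ f : Finset (Fin n) → ℕ,
        (∑ B ∈ σ.parts, f B) + (f X + f Y) = (∑ B ∈ π.parts, f B) + f (X ∪ Y) := by
      intro f
      have := replaceParts_sum π {X, Y} {X ∪ Y} hRsub hd hs hne f
      rwa [Finset.sum_pair hXY, Finset.sum_singleton] at this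
    by_cases hcov : b ≤ binSize a (X ∪ Y)
    · -- welfare increases: contradiction
      have kw := key (fun B => if b ≤ binSize a B then 1 else 0)
      simp only [if_neg (not_le.mpr hXu), if_neg (not_le.mpr hYu), if_pos hcov] at kw
      have := H1 σ
      rw [welfare_eq_sum, welfare_eq_sum] at this
      omega
    · have kw := key (fun B => if b ≤ binSize a B then 1 else 0)
      have kc := key (fun B => if b ≤ binSize a B then binSize a B else 0)
      have kq := key (fun B => if b ≤ binSize a B then binSize a B ^ 2 else 0)
      have kk := key (fun _ => 1)
      simp only [if_neg (not_le.mpr hXu), if_neg (not_le.mpr hYu), if_neg hcov] at kw kc kq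
      have hwe : welfare a b σ = welfare a b π := by
        rw [welfare_eq_sum, welfare_eq_sum]; omega
      have hce : csum a b σ = csum a b π := by
        unfold csum; omega
      have hqe : sqm a b σ = sqm a b π := by
        unfold sqm; omega
      have := H4 σ hwe hce hqe
      rw [Finset.card_eq_sum_ones, Finset.card_eq_sum_ones σ.parts] at this
      omega
  -- Step 2 : covered bins are minimal covered
  have hmin : ∀ B ∈ π.parts, b ≤ binSize a B → MinimalCovered a b B := by
    intro B hB hcovB
    refine ⟨hcovB, ?_⟩
    by_contra hcon
    push_neg at hcon
    obtain ⟨j, hjB, hjcov⟩ := hcon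
    have hRsub : ({B} : Finset (Finset (Fin n))) ⊆ π.parts := by
      intro t ht; rw [Finset.mem_singleton] at ht; exact ht ▸ hB
    have herase_ne : (B.erase j).Nonempty := by
      rcases Finset.eq_empty_or_nonempty (B.erase j) with h | h
      · rw [h] at hjcov
        simp [binSize] at hjcov
        omega
      · exact h
    have hdisj : Disjoint (B.erase j) ({j} : Finset (Fin n)) := by
      rw [Finset.disjoint_singleton_right]
      exact Finset.notMem_erase j B
    have hd := pairwiseDisjoint_pair' hdisj
    have hNP : B.erase j ≠ ({j} : Finset (Fin n)) := by
      intro h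
      have := Finset.notMem_erase j B
      rw [h] at this
      simp at this
    have hs : ({B.erase j, {j}} : Finset (Finset (Fin n))).sup id
        = ({B} : Finset (Finset (Fin n))).sup id := by
      simp only [Finset.sup_insert, Finset.sup_singleton, id, Finset.sup_eq_union]
      rw [Finset.union_comm, ← Finset.insert_eq, Finset.insert_erase hjB]
    have hne : (∅ : Finset (Fin n)) ∉ ({B.erase j, {j}} : Finset (Finset (Fin n))) := by
      rw [Finset.mem_insert, Finset.mem_singleton]
      push_neg
      constructor
      · intro h; rw [← h] at herase_ne; exact Finset.not_nonempty_empty herase_ne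
      · intro h; exact Finset.singleton_ne_empty j h.symm
    set σ := replaceParts π {B} {B.erase j, {j}} hRsub hd hs hne with hσdef
    have key : ∀ f : Finset (Fin n) → ℕ,
        (∑ C ∈ σ.parts, f C) + f B
          = (∑ C ∈ π.parts, f C) + (f (B.erase j) + f ({j} : Finset (Fin n))) := by
      intro f
      have := replaceParts_sum π {B} {B.erase j, {j}} hRsub hd hs hne f
      rwa [Finset.sum_pair hNP, Finset.sum_singleton] at this
    have hjuncov : ¬ b ≤ binSize a ({j} : Finset (Fin n)) := by
      simp only [binSize, Finset.sum_singleton]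
      exact not_le.mpr (hab j)
    have hkw := key (fun C => if b ≤ binSize a C then 1 else 0)
    have hkc := key (fun C => if b ≤ binSize a C then binSize a C else 0)
    simp only [if_pos hcovB, if_pos hjcov, if_neg hjuncov] at hkw hkc
    have hwe : welfare a b σ = welfare a b π := by
      rw [welfare_eq_sum, welfare_eq_sum]; omega
    have hsize : binSize a (B.erase j) + a j = binSize a B := by
      simpa [binSize] using Finset.sum_erase_add B a hjB
    have hc2 := H2 σ hwe
    unfold csum at hc2
    have haj := ha j
    omega
  -- Step 3 : no FNE(III) deviation
  refine ⟨π, ⟨⟨hreas, hmin⟩, ?_⟩, H1⟩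
  rintro ⟨j, Bi, E, hBi, hjBi, hEBi, hminN, hlt⟩
  set Bj := π.part j with hBjdef
  have hBj : Bj ∈ π.parts := π.part_mem.mpr (Finset.mem_univ j)
  have hjBj : j ∈ Bj := π.mem_part (Finset.mem_univ j)
  have hBiBj : Bi ≠ Bj := fun h => hjBi (h ▸ hjBj)
  have hdBiBj : Disjoint Bi Bj := hπpd hBi hBj hBiBj
  set N := insert j (Bi \ E) with hNdef
  set P := E ∪ Bj.erase j with hPdef
  have hjNsd : j ∉ Bi \ E := fun h => hjBi (Finset.mem_sdiff.mp h).1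
  have hsN : binSize a N = a j + binSize a (Bi \ E) := by
    simp [binSize, hNdef, Finset.sum_insert hjNsd]
  have hsplit : binSize a (Bi \ E) + binSize a E = binSize a Bi := by
    simpa [binSize] using Finset.sum_sdiff (f := a) hEBi
  have hBjsplit : binSize a (Bj.erase j) + a j = binSize a Bj := by
    simpa [binSize] using Finset.sum_erase_add Bj a hjBj
  have hdEe : Disjoint E (Bj.erase j) :=
    (hdBiBj.mono_left hEBi).mono_right (Finset.erase_subset j Bj)
  have hsP : binSize a P = binSize a E + binSize a (Bj.erase j) := by
    simp [binSize, hPdef, Finset.sum_union hdEe]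
  have hNcov : b ≤ binSize a N := hminN.1
  rw [lt_min_iff] at hlt
  obtain ⟨hlt1, hlt2⟩ := hlt
  have hltBi : b ≤ binSize a Bi → binSize a (Bi \ E) + a j < binSize a Bi := by
    intro h
    rw [delta, if_pos h] at hlt1
    exact_mod_cast hlt1
  have hltBj : b ≤ binSize a Bj → binSize a (Bi \ E) + a j < binSize a Bj := by
    intro h
    rw [delta, if_pos h] at hlt2
    exact_mod_cast hlt2
  have hnotboth : b ≤ binSize a Bi ∨ b ≤ binSize a Bj := by
    by_contra hc
    push_neg at hc
    have hcard : 1 < (π.parts.filter fun B => binSize a B < b).card := by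
      apply Finset.one_lt_card.mpr
      exact ⟨Bi, Finset.mem_filter.mpr ⟨hBi, hc.1⟩, Bj,
        Finset.mem_filter.mpr ⟨hBj, hc.2⟩, hBiBj⟩
    unfold Reasonable at hreas
    omega
  have hBipos : 0 < binSize a Bi := by
    obtain ⟨k, hk⟩ := π.nonempty_of_mem_parts hBi
    exact lt_of_lt_of_le (ha k) (Finset.single_le_sum (fun i _ => Nat.zero_le (a i)) hk)
  have hPne : P.Nonempty := by
    rcases Finset.eq_empty_or_nonempty P with hP | hP
    · exfalso
      rw [hPdef, Finset.union_eq_empty] at hP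
      have hE0 : binSize a E = 0 := by rw [hP.1]; simp [binSize]
      have herase0 : binSize a (Bj.erase j) = 0 := by rw [hP.2]; simp [binSize]
      rcases hnotboth with h | h
      · have := hltBi h; omega
      · have := hltBj h
        have haj := ha j
        omega
    · exact hP
  have hjP : j ∉ P := by
    rw [hPdef, Finset.mem_union]
    rintro (h | h)
    · exact hjBi (hEBi h)
    · exact (Finset.notMem_erase j Bj) h
  have hNP : N ≠ P := by
    intro h
    apply hjP
    rw [← h, hNdef]
    exact Finset.mem_insert_self j _
  have hdNP : Disjoint N P := by
    rw [Finset.disjoint_left]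
    intro x hx hxP
    rw [hNdef, Finset.mem_insert] at hx
    rw [hPdef, Finset.mem_union] at hxP
    rcases hx with rfl | hx
    · exact hjP (by rw [hPdef, Finset.mem_union]; exact hxP)
    · obtain ⟨hxBi, hxE⟩ := Finset.mem_sdiff.mp hx
      rcases hxP with h | h
      · exact hxE h
      · exact Finset.disjoint_left.mp hdBiBj hxBi (Finset.mem_of_mem_erase h)
  have hRsub : ({Bi, Bj} : Finset (Finset (Fin n))) ⊆ π.parts := by
    intro t ht
    rcases Finset.mem_insert.mp ht with rfl | ht
    · exact hBi
    · rw [Finset.mem_singleton] at ht; exact ht ▸ hBj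
  have hd := pairwiseDisjoint_pair' hdNP
  have hs : ({N, P} : Finset (Finset (Fin n))).sup id
      = ({Bi, Bj} : Finset (Finset (Fin n))).sup id := by
    simp only [Finset.sup_insert, Finset.sup_singleton, id, Finset.sup_eq_union]
    ext x
    simp only [hNdef, hPdef, Finset.mem_union, Finset.mem_insert, Finset.mem_sdiff,
      Finset.mem_erase]
    constructor
    · rintro ((rfl | ⟨hxBi, -⟩) | (hxE | ⟨-, hxBj⟩))
      exacts [Or.inr hjBj, Or.inl hxBi, Or.inl (hEBi hxE), Or.inr hxBj]
    · rintro (hxBi | hxBj)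
      · by_cases hxE : x ∈ E
        · exact Or.inr (Or.inl hxE)
        · exact Or.inl (Or.inr ⟨hxBi, hxE⟩)
      · by_cases hxj : x = j
        · exact Or.inl (Or.inl hxj)
        · exact Or.inr (Or.inr ⟨hxj, hxBj⟩)
  have hne : (∅ : Finset (Fin n)) ∉ ({N, P} : Finset (Finset (Fin n))) := by
    rw [Finset.mem_insert, Finset.mem_singleton]
    push_neg
    constructor
    · intro h
      have : j ∈ N := Finset.mem_insert_self j _
      rw [← h] at this
      simp at this
    · intro h
      rw [← h] at hPne
      exact Finset.not_nonempty_empty hPne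
  set σ := replaceParts π {Bi, Bj} {N, P} hRsub hd hs hne with hσdef
  have key : ∀ f : Finset (Fin n) → ℕ,
      (∑ C ∈ σ.parts, f C) + (f Bi + f Bj)
        = (∑ C ∈ π.parts, f C) + (f N + f P) := by
    intro f
    have := replaceParts_sum π {Bi, Bj} {N, P} hRsub hd hs hne f
    rwa [Finset.sum_pair hBiBj, Finset.sum_pair hNP] at this
  have hkw := key (fun C => if b ≤ binSize a C then 1 else 0)
  have hkc := key (fun C => if b ≤ binSize a C then binSize a C else 0)
  have hkq := key (fun C => if b ≤ binSize a C then binSize a C ^ 2 else 0)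
  have huv : binSize a N + binSize a P = binSize a Bi + binSize a Bj := by omega
  by_cases hci : b ≤ binSize a Bi <;> by_cases hcj : b ≤ binSize a Bj
  · -- both covered : squares increase
    have hux : binSize a N < binSize a Bi := by have := hltBi hci; omega
    have huy : binSize a N < binSize a Bj := by have := hltBj hcj; omega
    have hPcov : b ≤ binSize a P := by omega
    simp only [if_pos hci, if_pos hcj, if_pos hNcov, if_pos hPcov] at hkw hkc hkq
    have hwe : welfare a b σ = welfare a b π := by
      rw [welfare_eq_sum, welfare_eq_sum]; omega
    have hce : csum a b σ = csum a b π := by unfold csum; omega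
    have hq := H3 σ hwe hce
    unfold sqm at hq
    have hsq := sq_spread_nat huv hux huy
    omega
  · -- Bi covered, Bj uncovered
    have hux : binSize a N < binSize a Bi := by have := hltBi hci; omega
    by_cases hPcov : b ≤ binSize a P
    · simp only [if_pos hci, if_neg hcj, if_pos hNcov, if_pos hPcov] at hkw
      have := H1 σ
      rw [welfare_eq_sum, welfare_eq_sum] at this
      omega
    · simp only [if_pos hci, if_neg hcj, if_pos hNcov, if_neg hPcov] at hkw hkc
      have hwe : welfare a b σ = welfare a b π := by
        rw [welfare_eq_sum, welfare_eq_sum]; omega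
      have hc2 := H2 σ hwe
      unfold csum at hc2
      omega
  · -- Bi uncovered, Bj covered
    have huy : binSize a N < binSize a Bj := by have := hltBj hcj; omega
    by_cases hPcov : b ≤ binSize a P
    · simp only [if_neg hci, if_pos hcj, if_pos hNcov, if_pos hPcov] at hkw
      have := H1 σ
      rw [welfare_eq_sum, welfare_eq_sum] at this
      omega
    · simp only [if_neg hci, if_pos hcj, if_pos hNcov, if_neg hPcov] at hkw hkc
      have hwe : welfare a b σ = welfare a b π := by
        rw [welfare_eq_sum, welfare_eq_sum]; omega
      have hc2 := H2 σ hwe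
      unfold csum at hc2
      omega
  · rcases hnotboth with h | h
    · exact absurd h hci
    · exact absurd h hcj
end

section
/- Let π be a reasonable partition of an instance of selfish bin covering whose covered bins are B_1, …, B_{m−1} with s(B_1) ≤ s(B_2) ≤ … ≤ s(B_{m−1}), and let B_m denote the unique uncovered bin of π if one exists and B_m = ∅ otherwise. Then π is an SNE if and only if for every 1 ≤ k ≤ m−1, the bin B_k is a minimum subset w.r.t. (B_k ∪ B_{k+1} ∪ … ∪ B_{m−1} ∪ B_m, b). -/
open Finset

/-- characterization of SNE.  If the covered bins of a reasonable
partition are enumerated as `B 0, …, B (m-1)` in nondecreasing order of size, then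
`π` is an SNE iff each `B k` is a minimum subset w.r.t. the union of the bins of
index `≥ k` together with the unique uncovered bin (if any). -/
theorem stmt10 (n : ℕ) (hn : 1 ≤ n) (a : Fin n → ℕ) (b : ℕ)
    (ha : ∀ j, 0 < a j) (hab : ∀ j, a j < b)
    (π : Finpartition (univ : Finset (Fin n))) (hres : Reasonable a b π)
    (m : ℕ) (B : Fin m → Finset (Fin n))
    (hinj : Function.Injective B)
    (hmem : ∀ k : Fin m, B k ∈ π.parts ∧ b ≤ binSize a (B k))
    (hall : ∀ C ∈ π.parts, b ≤ binSize a C → ∃ k : Fin m, B k = C)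
    (hsorted : ∀ k l : Fin m, k ≤ l → binSize a (B k) ≤ binSize a (B l)) :
    IsSNE a b π ↔
      ∀ k : Fin m,
        IsMinSubset a b (B k)
          ((univ.filter fun l : Fin m => k ≤ l).biUnion B ∪ uncoveredBin a b π) := by
  have hb : 0 < b := lt_trans (ha ⟨0, hn⟩) (hab ⟨0, hn⟩)
  -- part equals the bin containing j
  have hpart_eq : ∀ (C : Finset (Fin n)), C ∈ π.parts → ∀ j ∈ C, π.part j = C := by
    intro C hC j hj
    exact π.eq_of_mem_parts (π.part_mem.mpr (mem_univ j)) hC (π.mem_part (mem_univ j)) hj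
  -- membership in the uncovered bin
  have hmem_uncov : ∀ j : Fin n, binSize a (π.part j) < b → j ∈ uncoveredBin a b π := by
    intro j hj
    refine Finset.mem_sup.mpr ⟨π.part j, ?_, π.mem_part (mem_univ j)⟩
    exact mem_filter.mpr ⟨π.part_mem.mpr (mem_univ j), hj⟩
  have huncov_lt : binSize a (uncoveredBin a b π) < b := by
    rcases Finset.eq_empty_or_nonempty (π.parts.filter fun C => binSize a C < b) with h | ⟨U, hU⟩
    · rw [uncoveredBin, h]
      simpa [binSize] using hb
    · have hsing : (π.parts.filter fun C => binSize a C < b) = {U} := by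
        apply Finset.eq_singleton_iff_unique_mem.mpr
        exact ⟨hU, fun x hx => Finset.card_le_one.mp hres x hx U hU⟩
      rw [uncoveredBin, hsing, Finset.sup_singleton, id]
      exact (mem_filter.mp hU).2
  have hmono : ∀ S T : Finset (Fin n), S ⊆ T → binSize a S ≤ binSize a T := by
    intro S T h
    exact Finset.sum_le_sum_of_subset h
  have huncov_mem : ∀ j : Fin n, j ∈ uncoveredBin a b π → binSize a (π.part j) < b := by
    intro j hj
    obtain ⟨U, hU, hjU⟩ := Finset.mem_sup.mp hj
    have hU' := mem_filter.mp hU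
    rw [hpart_eq U hU'.1 j hjU]
    exact hU'.2
  constructor
  · -- SNE → min subsets
    intro hsne k
    refine ⟨?_, (hmem k).2, ?_⟩
    · refine Finset.Subset.trans ?_ Finset.subset_union_left
      exact Finset.subset_biUnion_of_mem B (mem_filter.mpr ⟨mem_univ k, le_refl k⟩)
    · intro G hG hGb
      by_contra h
      push_neg at h
      apply hsne
      refine ⟨G, hGb, ?_⟩
      intro j hj
      rcases Finset.mem_union.mp (hG hj) with hj' | hj'
      · obtain ⟨l, hl, hjl⟩ := Finset.mem_biUnion.mp hj'
        have hkl : k ≤ l := (mem_filter.mp hl).2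
        right
        rw [hpart_eq (B l) (hmem l).1 j hjl]
        exact lt_of_lt_of_le h (hsorted k l hkl)
      · exact Or.inl (huncov_mem j hj')
  · -- min subsets → SNE
    intro hmin
    rintro ⟨S, hSb, hS⟩
    set K := univ.filter fun k : Fin m => (B k ∩ S).Nonempty with hK
    rcases Finset.eq_empty_or_nonempty K with hKe | hKn
    · -- every item of S is in the uncovered bin
      have hsub : S ⊆ uncoveredBin a b π := by
        intro j hj
        apply hmem_uncov
        by_contra h
        push_neg at h
        obtain ⟨l, hl⟩ := hall (π.part j) (π.part_mem.mpr (mem_univ j)) h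
        have : l ∈ K := by
          refine mem_filter.mpr ⟨mem_univ l, ⟨j, Finset.mem_inter.mpr ⟨?_, hj⟩⟩⟩
          rw [hl]; exact π.mem_part (mem_univ j)
        rw [hKe] at this
        exact absurd this (Finset.notMem_empty l)
      have := hmono S _ hsub
      omega
    · -- take the minimal covered bin meeting S
      set k₀ := K.min' hKn with hk₀
      have hk₀K : k₀ ∈ K := K.min'_mem hKn
      obtain ⟨j, hjm⟩ := (mem_filter.mp hk₀K).2
      have hj1 : j ∈ B k₀ := (Finset.mem_inter.mp hjm).1
      have hj2 : j ∈ S := (Finset.mem_inter.mp hjm).2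
      have hpj : π.part j = B k₀ := hpart_eq (B k₀) (hmem k₀).1 j hj1
      have hSlt : binSize a S < binSize a (B k₀) := by
        rcases hS j hj2 with h | h
        · rw [hpj] at h; exact absurd (hmem k₀).2 (not_le.mpr h)
        · rwa [hpj] at h
      have hsub : S ⊆ (univ.filter fun l : Fin m => k₀ ≤ l).biUnion B ∪ uncoveredBin a b π := by
        intro i hi
        by_cases h : b ≤ binSize a (π.part i)
        · obtain ⟨l, hl⟩ := hall (π.part i) (π.part_mem.mpr (mem_univ i)) h
          have hlK : l ∈ K := by
            refine mem_filter.mpr ⟨mem_univ l, ⟨i, Finset.mem_inter.mpr ⟨?_, hi⟩⟩⟩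
            rw [hl]; exact π.mem_part (mem_univ i)
          refine Finset.mem_union_left _ (Finset.mem_biUnion.mpr ⟨l, ?_, ?_⟩)
          · exact mem_filter.mpr ⟨mem_univ l, K.min'_le l hlK⟩
          · rw [hl]; exact π.mem_part (mem_univ i)
        · exact Finset.mem_union_right _ (hmem_uncov i (not_le.mp h))
      have := (hmin k₀).2.2 S hsub hSb
      omega
end

section
/- Every instance of selfish bin covering admits a reasonable partition that is a strong Nash equilibrium (SNE). -/
open Finset

namespace SBC

variable {n : ℕ} (a : Fin n → ℕ) (b : ℕ)

/-- weight of a bin -/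
def w (B : Finset (Fin n)) : ℕ :=
  if b ≤ binSize a B then (n + 1) ^ ((∑ j, a j) - binSize a B) else 0

def Phi (π : Finpartition (univ : Finset (Fin n))) : ℕ := ∑ C ∈ π.parts, w a b C

def Psi (π : Finpartition (univ : Finset (Fin n))) : ℕ :=
  (n + 1) * Phi a b π + (n - π.parts.card)

variable {a b}

lemma binSize_mono {B C : Finset (Fin n)} (h : B ⊆ C) : binSize a B ≤ binSize a C :=
  Finset.sum_le_sum_of_subset h

lemma binSize_le_S (B : Finset (Fin n)) : binSize a B ≤ ∑ j, a j :=
  binSize_mono (subset_univ B)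

lemma w_empty (hb : 1 ≤ b) : w a b (∅ : Finset (Fin n)) = 0 := by
  have : binSize a (∅ : Finset (Fin n)) = 0 := by simp [binSize]
  rw [w, this, if_neg (by omega)]

lemma w_le (B : Finset (Fin n)) : w a b B ≤ (n + 1) ^ (∑ j, a j) := by
  rw [w]
  split
  · exact Nat.pow_le_pow_right (by omega) (Nat.sub_le _ _)
  · exact Nat.zero_le _

lemma one_le_w {B : Finset (Fin n)} (h : b ≤ binSize a B) : 1 ≤ w a b B := by
  rw [w, if_pos h]
  exact Nat.one_le_pow _ _ (by omega)

lemma w_eq_zero {B : Finset (Fin n)} (h : binSize a B < b) : w a b B = 0 := by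
  rw [w, if_neg (by omega)]

lemma parts_card_le (π : Finpartition (univ : Finset (Fin n))) : π.parts.card ≤ n := by
  have := π.card_parts_le_card
  simpa using this

lemma Phi_le (π : Finpartition (univ : Finset (Fin n))) :
    Phi a b π ≤ n * (n + 1) ^ (∑ j, a j) := by
  calc Phi a b π ≤ π.parts.card * (n + 1) ^ (∑ j, a j) := by
        rw [Phi]
        have := Finset.sum_le_card_nsmul π.parts (w a b) ((n + 1) ^ (∑ j, a j))
          (fun C _ => w_le C)
        simpa using this
    _ ≤ n * (n + 1) ^ (∑ j, a j) :=
        Nat.mul_le_mul_right _ (parts_card_le π)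

lemma Psi_le (π : Finpartition (univ : Finset (Fin n))) :
    Psi a b π ≤ (n + 1) * (n * (n + 1) ^ (∑ j, a j)) + n := by
  have h1 := Phi_le (a := a) (b := b) π
  have : (n + 1) * Phi a b π ≤ (n + 1) * (n * (n + 1) ^ (∑ j, a j)) :=
    Nat.mul_le_mul_left _ h1
  rw [Psi]; omega

/-- the partition obtained from `π` by forming the coalition bin `B`. -/
def improve (π : Finpartition (univ : Finset (Fin n))) (B : Finset (Fin n)) (hB : B.Nonempty) :
    Finpartition (univ : Finset (Fin n)) :=
  Finpartition.ofErase (insert B (π.parts.image (· \ B)))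
    (by
      rw [Finset.supIndep_iff_pairwiseDisjoint]
      intro x hx y hy hxy
      simp only [coe_insert, Set.mem_insert_iff, coe_image, Set.mem_image, mem_coe] at hx hy
      rcases hx with rfl | ⟨C, hC, rfl⟩
      · rcases hy with rfl | ⟨C, hC, rfl⟩
        · exact absurd rfl hxy
        · exact disjoint_sdiff_self_right
      · rcases hy with rfl | ⟨C', hC', rfl⟩
        · exact disjoint_sdiff_self_left
        · have hne : C ≠ C' := by rintro rfl; exact hxy rfl
          exact Finset.disjoint_of_subset_left (Finset.sdiff_subset)
            (Finset.disjoint_of_subset_right (Finset.sdiff_subset)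
              (π.disjoint hC hC' hne)))
    (by
      apply Finset.eq_univ_of_forall
      intro x
      rw [Finset.mem_sup]
      by_cases hxB : x ∈ B
      · exact ⟨B, mem_insert_self _ _, hxB⟩
      · refine ⟨π.part x \ B, mem_insert_of_mem
          (mem_image_of_mem _ (π.part_mem.2 (mem_univ x))), ?_⟩
        exact Finset.mem_sdiff.mpr ⟨π.mem_part (mem_univ x), hxB⟩)

lemma improve_parts (π : Finpartition (univ : Finset (Fin n))) (B : Finset (Fin n))
    (hB : B.Nonempty) :
    (improve π B hB).parts = (insert B (π.parts.image (· \ B))).erase ∅ := rfl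

lemma Phi_improve_ge (hb : 1 ≤ b) (π : Finpartition (univ : Finset (Fin n)))
    {B : Finset (Fin n)} (hB : B.Nonempty) :
    w a b B + ∑ C ∈ π.parts, w a b (C \ B) ≤ Phi a b (improve π B hB) := by
  rw [Phi, improve_parts]
  rw [Finset.sum_erase _ (w_empty hb)]
  have hBnot : B ∉ π.parts.image (· \ B) := by
    rintro h
    obtain ⟨C, hC, hCB⟩ := Finset.mem_image.mp h
    obtain ⟨x, hx⟩ := hB
    have : x ∈ C \ B := by rw [hCB]; exact hx
    exact (Finset.mem_sdiff.mp this).2 hx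
  rw [Finset.sum_insert hBnot]
  apply Nat.add_le_add_left
  -- ∑ C ∈ π.parts, w (C \ B) ≤ ∑ over image
  set T := π.parts.filter (fun C => (C \ B).Nonempty) with hT
  have h1 : ∑ C ∈ π.parts, w a b (C \ B) = ∑ C ∈ T, w a b (C \ B) := by
    refine (Finset.sum_subset (Finset.filter_subset _ _) ?_).symm
    intro C hC hCT
    have : ¬ (C \ B).Nonempty := by
      intro h; exact hCT (Finset.mem_filter.mpr ⟨hC, h⟩)
    rw [Finset.not_nonempty_iff_eq_empty.mp this]
    exact w_empty hb
  rw [h1]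
  have h2 : ∑ C ∈ T, w a b (C \ B) = ∑ P ∈ T.image (· \ B), w a b P := by
    refine (Finset.sum_image ?_).symm
    intro C hC C' hC' hEq
    have hCne : (C \ B).Nonempty := (Finset.mem_filter.mp hC).2
    obtain ⟨x, hx⟩ := hCne
    have hx' : x ∈ C' \ B := (show C \ B = C' \ B from hEq) ▸ hx
    exact π.eq_of_mem_parts (Finset.mem_filter.mp hC).1 (Finset.mem_filter.mp hC').1
      (Finset.mem_sdiff.mp hx).1 (Finset.mem_sdiff.mp hx').1
  rw [h2]
  apply Finset.sum_le_sum_of_subset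
  exact Finset.image_subset_image (Finset.filter_subset _ _)

lemma Psi_lt_improve (hb : 1 ≤ b) (π : Finpartition (univ : Finset (Fin n)))
    {B : Finset (Fin n)} (hcov : b ≤ binSize a B)
    (hblock : ∀ j ∈ B, binSize a (π.part j) < b ∨ binSize a B < binSize a (π.part j)) :
    Psi a b π < Psi a b (improve π B (by
      rcases Finset.eq_empty_or_nonempty B with rfl | h
      · exfalso; have : binSize a (∅ : Finset (Fin n)) = 0 := by simp [binSize]
        omega
      · exact h)) := by
  set S := ∑ j, a j with hS
  set s := binSize a B with hs
  have hB : B.Nonempty := by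
    rcases Finset.eq_empty_or_nonempty B with rfl | h
    · exfalso; have : binSize a (∅ : Finset (Fin n)) = 0 := by simp [binSize]
      omega
    · exact h
  -- covered part intersecting B has size > s
  have hbig : ∀ C ∈ π.parts, b ≤ binSize a C → (C ∩ B).Nonempty → s < binSize a C := by
    intro C hC hCcov ⟨j, hj⟩
    have hj' := Finset.mem_inter.mp hj
    have hpart : π.part j = C := π.part_eq_of_mem hC hj'.1
    rcases hblock j hj'.2 with h | h
    · rw [hpart] at h; omega
    · rw [hpart] at h; exact h
  set K := π.parts.filter (fun C => b ≤ binSize a C ∧ (C ∩ B).Nonempty) with hK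
  -- termwise bound
  have h1 : ∀ C ∈ π.parts,
      w a b C ≤ w a b (C \ B) +
        (if b ≤ binSize a C ∧ (C ∩ B).Nonempty then (n + 1) ^ (S - s - 1) else 0) := by
    intro C hC
    by_cases hCcov : b ≤ binSize a C
    · by_cases hint : (C ∩ B).Nonempty
      · rw [if_pos ⟨hCcov, hint⟩]
        have hlt : s < binSize a C := hbig C hC hCcov hint
        have hle : binSize a C ≤ S := binSize_le_S C
        have : w a b C ≤ (n + 1) ^ (S - s - 1) := by
          rw [w, if_pos hCcov]
          exact Nat.pow_le_pow_right (by omega) (by omega)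
        omega
      · have : C \ B = C := by
          rw [Finset.sdiff_eq_self_iff_disjoint]
          rw [Finset.disjoint_right]
          intro x hxB hxC
          exact hint ⟨x, Finset.mem_inter.mpr ⟨hxC, hxB⟩⟩
        rw [this]; omega
    · rw [w_eq_zero (by omega)]; exact Nat.zero_le _
  have hsum : Phi a b π ≤ (∑ C ∈ π.parts, w a b (C \ B)) + K.card * (n + 1) ^ (S - s - 1) := by
    calc Phi a b π ≤ ∑ C ∈ π.parts, (w a b (C \ B) +
          (if b ≤ binSize a C ∧ (C ∩ B).Nonempty then (n + 1) ^ (S - s - 1) else 0)) :=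
          Finset.sum_le_sum h1
      _ = (∑ C ∈ π.parts, w a b (C \ B)) + ∑ C ∈ π.parts,
          (if b ≤ binSize a C ∧ (C ∩ B).Nonempty then (n + 1) ^ (S - s - 1) else 0) :=
          Finset.sum_add_distrib
      _ = (∑ C ∈ π.parts, w a b (C \ B)) + K.card * (n + 1) ^ (S - s - 1) := by
          rw [Finset.sum_ite, Finset.sum_const, Finset.sum_const_zero, add_zero, smul_eq_mul]
  have hKbound : K.card * (n + 1) ^ (S - s - 1) + 1 ≤ w a b B := by
    rw [w, if_pos hcov, ← hS, ← hs]
    rcases Finset.eq_empty_or_nonempty K with hKe | hKne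
    · rw [hKe]; simpa using Nat.one_le_pow _ _ (show 0 < n + 1 by omega)
    · obtain ⟨C, hCK⟩ := hKne
      have hmem := Finset.mem_filter.mp hCK
      have hCparts := hmem.1
      have hCcov := hmem.2.1
      have hCint := hmem.2.2
      have hlt : s < binSize a C := hbig C hCparts hCcov hCint
      have hle : binSize a C ≤ S := binSize_le_S C
      have hsS : s + 1 ≤ S := by omega
      have hKn : K.card ≤ n := le_trans (Finset.card_le_card (Finset.filter_subset _ _))
        (parts_card_le π)
      have hSs : S - s = (S - s - 1) + 1 := by omega
      have hone : 1 ≤ (n + 1) ^ (S - s - 1) := Nat.one_le_pow _ _ (by omega)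
      calc K.card * (n + 1) ^ (S - s - 1) + 1
          ≤ n * (n + 1) ^ (S - s - 1) + (n + 1) ^ (S - s - 1) := by
            have := Nat.mul_le_mul_right ((n + 1) ^ (S - s - 1)) hKn
            omega
        _ = (n + 1) ^ (S - s - 1) * (n + 1) := by ring
        _ = (n + 1) ^ (S - s) := by rw [← pow_succ, ← hSs]
  have hPhi : Phi a b π + 1 ≤ Phi a b (improve π B hB) := by
    have := Phi_improve_ge (a := a) hb π hB
    omega
  -- conclude for Psi
  have h2 : (n + 1) * (Phi a b π + 1) ≤ (n + 1) * Phi a b (improve π B hB) :=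
    Nat.mul_le_mul_left _ hPhi
  have h3 : n - π.parts.card ≤ n := Nat.sub_le _ _
  have h4 : (n + 1) * (Phi a b π + 1) = (n + 1) * Phi a b π + (n + 1) := by ring
  rw [Psi, Psi]
  omega

/-- merge two parts of a partition. -/
def merge (π : Finpartition (univ : Finset (Fin n))) (C D : Finset (Fin n))
    (hC : C ∈ π.parts) (hD : D ∈ π.parts) (hCD : C ≠ D) :
    Finpartition (univ : Finset (Fin n)) :=
  Finpartition.ofErase (insert (C ∪ D) ((π.parts.erase C).erase D))
    (by
      rw [Finset.supIndep_iff_pairwiseDisjoint]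
      intro x hx y hy hxy
      simp only [coe_insert, Set.mem_insert_iff, mem_coe, Finset.mem_erase] at hx hy
      have hdis : ∀ P, P ≠ D → P ≠ C → P ∈ π.parts → Disjoint (C ∪ D) P := by
        intro P hPD hPC hP
        rw [Finset.disjoint_union_left]
        exact ⟨π.disjoint hC hP (fun h => hPC h.symm),
               π.disjoint hD hP (fun h => hPD h.symm)⟩
      rcases hx with rfl | ⟨hxD, hxC, hxm⟩
      · rcases hy with rfl | ⟨hyD, hyC, hym⟩
        · exact absurd rfl hxy
        · exact hdis y hyD hyC hym
      · rcases hy with rfl | ⟨hyD, hyC, hym⟩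
        · exact (hdis x hxD hxC hxm).symm
        · exact π.disjoint hxm hym hxy)
    (by
      apply Finset.eq_univ_of_forall
      intro x
      rw [Finset.mem_sup]
      have hpm : π.part x ∈ π.parts := π.part_mem.2 (mem_univ x)
      have hpx : x ∈ π.part x := π.mem_part (mem_univ x)
      by_cases h1 : π.part x = C
      · exact ⟨C ∪ D, mem_insert_self _ _, Finset.mem_union_left _ (h1 ▸ hpx)⟩
      by_cases h2 : π.part x = D
      · exact ⟨C ∪ D, mem_insert_self _ _, Finset.mem_union_right _ (h2 ▸ hpx)⟩
      · exact ⟨π.part x, mem_insert_of_mem (Finset.mem_erase.mpr ⟨h2,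
          Finset.mem_erase.mpr ⟨h1, hpm⟩⟩), hpx⟩)

lemma merge_parts (π : Finpartition (univ : Finset (Fin n))) (C D : Finset (Fin n))
    (hC : C ∈ π.parts) (hD : D ∈ π.parts) (hCD : C ≠ D) :
    (merge π C D hC hD hCD).parts = insert (C ∪ D) ((π.parts.erase C).erase D) := by
  show (insert (C ∪ D) ((π.parts.erase C).erase D)).erase ⊥ = _
  apply Finset.erase_eq_of_notMem
  intro h
  rcases Finset.mem_insert.mp h with h | h
  · obtain ⟨x, hx⟩ := π.nonempty_of_mem_parts hC
    have : x ∈ C ∪ D := Finset.mem_union_left _ hx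
    rw [← h] at this
    exact absurd this (Finset.notMem_empty x)
  · exact π.bot_notMem (Finset.mem_of_mem_erase (Finset.mem_of_mem_erase h))

lemma union_not_mem (π : Finpartition (univ : Finset (Fin n))) {C D : Finset (Fin n)}
    (hC : C ∈ π.parts) (hD : D ∈ π.parts) (hCD : C ≠ D) :
    C ∪ D ∉ (π.parts.erase C).erase D := by
  intro h
  have hP : C ∪ D ∈ π.parts := Finset.mem_of_mem_erase (Finset.mem_of_mem_erase h)
  have hne : C ∪ D ≠ C := (Finset.mem_erase.mp (Finset.mem_of_mem_erase h)).1
  have hdis : Disjoint (C ∪ D) C := π.disjoint hP hC hne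
  obtain ⟨x, hx⟩ := π.nonempty_of_mem_parts hC
  exact Finset.disjoint_left.mp hdis (Finset.mem_union_left _ hx) hx

lemma Psi_lt_merge (π : Finpartition (univ : Finset (Fin n))) {C D : Finset (Fin n)}
    (hC : C ∈ π.parts) (hD : D ∈ π.parts) (hCD : C ≠ D)
    (hCu : binSize a C < b) (hDu : binSize a D < b) :
    Psi a b π < Psi a b (merge π C D hC hD hCD) := by
  have hDm : D ∈ π.parts.erase C := Finset.mem_erase.mpr ⟨fun h => hCD h.symm, hD⟩
  have hnot := union_not_mem π hC hD hCD
  have hcard : (merge π C D hC hD hCD).parts.card = π.parts.card - 1 := by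
    rw [merge_parts, Finset.card_insert_of_notMem hnot, Finset.card_erase_of_mem hDm,
      Finset.card_erase_of_mem hC]
    have : 2 ≤ π.parts.card := Finset.one_lt_card.mpr ⟨C, hC, D, hD, hCD⟩
    omega
  have hPhi : Phi a b π ≤ Phi a b (merge π C D hC hD hCD) := by
    rw [Phi, Phi, merge_parts, Finset.sum_insert hnot,
      Finset.sum_erase _ (w_eq_zero hDu), Finset.sum_erase _ (w_eq_zero hCu)]
    exact Nat.le_add_left _ _
  have h2 : 2 ≤ π.parts.card := Finset.one_lt_card.mpr ⟨C, hC, D, hD, hCD⟩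
  have h3 : π.parts.card ≤ n := parts_card_le π
  have h4 : (n + 1) * Phi a b π ≤ (n + 1) * Phi a b (merge π C D hC hD hCD) :=
    Nat.mul_le_mul_left _ hPhi
  rw [Psi, Psi, hcard]
  omega

lemma exists_max [Nonempty (Fin n)] :
    ∃ π : Finpartition (univ : Finset (Fin n)),
      ∀ π' : Finpartition (univ : Finset (Fin n)), Psi a b π' ≤ Psi a b π := by
  by_contra h
  push_neg at h
  have key : ∀ k : ℕ, ∃ π : Finpartition (univ : Finset (Fin n)), k ≤ Psi a b π := by
    intro k
    induction k with
    | zero =>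
        exact ⟨Finpartition.indiscrete (by
          simpa using Finset.univ_nonempty.ne_empty), Nat.zero_le _⟩
    | succ k ih =>
        obtain ⟨π, hπ⟩ := ih
        obtain ⟨π', hπ'⟩ := h π
        exact ⟨π', by omega⟩
  obtain ⟨π, hπ⟩ := key ((n + 1) * (n * (n + 1) ^ (∑ j, a j)) + n + 1)
  have := Psi_le (a := a) (b := b) π
  omega

end SBC

/-- every instance admits a reasonable partition that is an SNE. -/
theorem stmt11 (n : ℕ) (hn : 1 ≤ n) (a : Fin n → ℕ) (b : ℕ)
    (ha : ∀ j, 0 < a j) (hab : ∀ j, a j < b) :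
    ∃ π : Finpartition (univ : Finset (Fin n)),
      Reasonable a b π ∧ IsSNE a b π := by
  have hne : Nonempty (Fin n) := ⟨⟨0, hn⟩⟩
  have hb : 1 ≤ b := by
    have h1 := ha ⟨0, hn⟩
    have h2 := hab ⟨0, hn⟩
    omega
  obtain ⟨π, hmax⟩ := SBC.exists_max (a := a) (b := b)
  refine ⟨π, ?_, ?_⟩
  · rw [Reasonable]
    by_contra h
    rw [not_le] at h
    obtain ⟨C, hC, D, hD, hCD⟩ := Finset.one_lt_card.mp h
    have hC' := Finset.mem_filter.mp hC
    have hD' := Finset.mem_filter.mp hD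
    exact absurd (hmax _) (not_le.mpr
      (SBC.Psi_lt_merge π hC'.1 hD'.1 hCD hC'.2 hD'.2))
  · intro hcontra
    obtain ⟨B, hBcov, hblock⟩ := hcontra
    exact absurd (hmax _) (not_le.mpr (SBC.Psi_lt_improve hb π hBcov hblock))
end

section
/- Every reasonable partition that is a strong Nash equilibrium (SNE) is rational; that is, every covered bin of a reasonable SNE is minimal covered. -/
open Finset

/-- every reasonable SNE is rational. -/
theorem stmt12 (n : ℕ) (hn : 1 ≤ n) (a : Fin n → ℕ) (b : ℕ)
    (ha : ∀ j, 0 < a j) (hab : ∀ j, a j < b)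
    (π : Finpartition (univ : Finset (Fin n)))
    (hres : Reasonable a b π) (hsne : IsSNE a b π) :
    RationalPartition a b π := by
  refine ⟨hres, fun B hB hcov => ⟨hcov, fun j hj => ?_⟩⟩
  by_contra h
  push_neg at h
  exact hsne ⟨B.erase j, h, fun k hk => by
    have hkB : k ∈ B := Finset.mem_of_mem_erase hk
    have hpart : π.part k = B := π.part_eq_of_mem hB hkB
    right
    rw [hpart]
    have : binSize a (B.erase j) + a j = binSize a B := Finset.sum_erase_add B a hj
    have := ha j
    omega⟩
end
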